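/- arXiv:0712.0939 — 9 statements merged into one kernel-verified Lean document; each statement's English description precedes it below -/
import Mathlib

section
/- Let w_1,…,w_n ∈ [0,1] with N := Σ_{i=1}^n w_i > 0, let θ* ∈ Θ, and let Y_1,…,Y_n be independent random variables such that Y_i has law P_{θ*} for every i with w_i > 0. Set θ̃ := Σ_{i=1}^n w_i·Y_i / N and assume θ̃ ∈ Θ almost surely. Then for every z > 0, P(N·K(θ̃, θ*) > z) ≤ 2·e^{−z}. -/
open MeasureTheory ProbabilityTheory Real BigOperators

/-- Integral of `exp((C θz - C θstar) * y)` under the exponential-family law at `θstar`. -/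
lemma expfam_exp_integral
    (ν : Measure ℝ) [SigmaFinite ν]
    (q : ℝ → ℝ) (hq : Measurable q) (hqnn : ∀ y, 0 ≤ q y)
    (B C : ℝ → ℝ) (p : ℝ → ℝ → ℝ) (hp : ∀ y a, p y a = q y * Real.exp (y * C a - B a))
    (Pθ : ℝ → Measure ℝ) (θstar θz : ℝ)
    (hPs : Pθ θstar = ν.withDensity (fun y => ENNReal.ofReal (p y θstar)))
    (hPz : Pθ θz = ν.withDensity (fun y => ENNReal.ofReal (p y θz)))
    (hprobz : IsProbabilityMeasure (Pθ θz)) :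
    Integrable (fun y => Real.exp ((C θz - C θstar) * y)) (Pθ θstar) ∧
      ∫ y, Real.exp ((C θz - C θstar) * y) ∂(Pθ θstar) = Real.exp (B θz - B θstar) := by
  have hpmeas : ∀ a : ℝ, Measurable fun y => ENNReal.ofReal (p y a) := by
    intro a
    apply Measurable.ennreal_ofReal
    have : Measurable fun y => Real.exp (y * C a - B a) :=
      ((measurable_id.mul_const (C a)).sub_const (B a)).exp
    simp only [hp]; exact hq.mul this
  have hexpmeas : Measurable fun y => Real.exp ((C θz - C θstar) * y) :=
    (measurable_const.mul measurable_id).exp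
  have key : ∀ y : ℝ,
      ENNReal.ofReal (p y θstar) * ENNReal.ofReal (Real.exp ((C θz - C θstar) * y))
        = ENNReal.ofReal (Real.exp (B θz - B θstar)) * ENNReal.ofReal (p y θz) := by
    intro y
    rw [← ENNReal.ofReal_mul (by rw [hp]; exact mul_nonneg (hqnn y) (Real.exp_pos _).le), ← ENNReal.ofReal_mul (Real.exp_pos _).le]
    congr 1
    rw [hp, hp, mul_assoc, ← Real.exp_add, mul_comm (Real.exp (B θz - B θstar)),
      mul_assoc, ← Real.exp_add]
    congr 2
    ring
  have hlint : ∫⁻ y, ENNReal.ofReal (Real.exp ((C θz - C θstar) * y)) ∂(Pθ θstar)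
      = ENNReal.ofReal (Real.exp (B θz - B θstar)) := by
    rw [hPs, lintegral_withDensity_eq_lintegral_mul ν (hpmeas θstar)
      hexpmeas.ennreal_ofReal]
    have : ∫⁻ y, (ENNReal.ofReal (p y θstar) * ENNReal.ofReal
        (Real.exp ((C θz - C θstar) * y))) ∂ν
        = ∫⁻ y, ENNReal.ofReal (Real.exp (B θz - B θstar)) * ENNReal.ofReal (p y θz) ∂ν := by
      exact lintegral_congr key
    rw [show ((fun y => ENNReal.ofReal (p y θstar)) * fun y =>
        ENNReal.ofReal (Real.exp ((C θz - C θstar) * y)))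
        = fun y => ENNReal.ofReal (p y θstar) * ENNReal.ofReal
          (Real.exp ((C θz - C θstar) * y)) from rfl, this,
      lintegral_const_mul _ (hpmeas θz)]
    have huniv : ∫⁻ y, ENNReal.ofReal (p y θz) ∂ν = 1 := by
      have : Pθ θz Set.univ = 1 := measure_univ
      rw [hPz, withDensity_apply _ MeasurableSet.univ, Measure.restrict_univ] at this
      exact this
    rw [huniv, mul_one]
  have hnn : 0 ≤ᵐ[Pθ θstar] fun y => Real.exp ((C θz - C θstar) * y) :=
    Filter.Eventually.of_forall fun y => (Real.exp_pos _).le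
  have hintg : Integrable (fun y => Real.exp ((C θz - C θstar) * y)) (Pθ θstar) := by
    refine ⟨hexpmeas.aestronglyMeasurable, ?_⟩
    rw [hasFiniteIntegral_iff_ofReal hnn, hlint]
    exact ENNReal.ofReal_lt_top
  refine ⟨hintg, ?_⟩
  rw [integral_eq_lintegral_of_nonneg_ae hnn hexpmeas.aestronglyMeasurable, hlint,
    ENNReal.toReal_ofReal (Real.exp_pos _).le]

/-- Jensen's inequality for `x ↦ x ^ w`, `w ∈ [0,1]`, applied to `exp(c y)`. -/
lemma jensen_exp_pow (μ : Measure ℝ) [IsProbabilityMeasure μ] (c h w : ℝ)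
    (hw0 : 0 ≤ w) (hw1 : w ≤ 1)
    (hint : Integrable (fun y => Real.exp (c * y)) μ)
    (hval : ∫ y, Real.exp (c * y) ∂μ = Real.exp h) :
    Integrable (fun y => Real.exp (w * (c * y))) μ ∧
      ∫ y, Real.exp (w * (c * y)) ∂μ ≤ Real.exp (w * h) := by
  have hrw : ∀ y : ℝ, Real.exp (w * (c * y)) = Real.exp (c * y) ^ w := by
    intro y; rw [mul_comm w, Real.exp_mul]
  have hmeas : Measurable fun y => Real.exp (w * (c * y)) :=
    (measurable_const.mul (measurable_const.mul measurable_id)).exp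
  have hbound : ∀ y : ℝ, Real.exp (w * (c * y)) ≤ 1 + Real.exp (c * y) := by
    intro y
    rw [hrw]
    rcases le_or_gt (Real.exp (c * y)) 1 with hle | hgt
    · have : Real.exp (c * y) ^ w ≤ 1 := Real.rpow_le_one (Real.exp_pos _).le hle hw0
      linarith [Real.exp_pos (c * y)]
    · have : Real.exp (c * y) ^ w ≤ Real.exp (c * y) ^ (1 : ℝ) :=
        Real.rpow_le_rpow_of_exponent_le hgt.le hw1
      rw [Real.rpow_one] at this
      linarith
  have hintw : Integrable (fun y => Real.exp (w * (c * y))) μ := by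
    refine Integrable.mono ((integrable_const 1).add hint) hmeas.aestronglyMeasurable ?_
    refine Filter.Eventually.of_forall fun y => ?_
    have h1 : (0:ℝ) < 1 + Real.exp (c * y) := by linarith [Real.exp_pos (c * y)]
    simp only [Pi.add_apply, Real.norm_eq_abs]
    rw [abs_of_pos (Real.exp_pos _), abs_of_pos h1]
    exact hbound y
  refine ⟨hintw, ?_⟩
  have hconc : ConcaveOn ℝ (Set.Ici (0 : ℝ)) fun x : ℝ => x ^ w :=
    Real.concaveOn_rpow hw0 hw1
  have hjensen := hconc.le_map_integral (μ := μ)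
    (f := fun y => Real.exp (c * y))
    ((Real.continuous_rpow_const hw0).continuousOn) isClosed_Ici
    (Filter.Eventually.of_forall fun y => (Real.exp_pos _).le) hint
    (by
      have : (fun y => ((fun x : ℝ => x ^ w) ∘ fun y => Real.exp (c * y)) y)
          = fun y => Real.exp (w * (c * y)) := by
        funext y; simp [Function.comp, hrw y]
      rw [show ((fun x : ℝ => x ^ w) ∘ fun y => Real.exp (c * y))
          = fun y => Real.exp (w * (c * y)) from this]
      exact hintw)
  calc ∫ y, Real.exp (w * (c * y)) ∂μ = ∫ y, Real.exp (c * y) ^ w ∂μ := by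
        simp_rw [hrw]
    _ ≤ (∫ y, Real.exp (c * y) ∂μ) ^ w := hjensen
    _ = Real.exp (w * h) := by rw [hval, mul_comm w, Real.exp_mul]

/-- Chernoff/Markov core bound for the weighted sum. -/
lemma markov_core
    {Ω : Type*} [MeasurableSpace Ω] (P : Measure Ω) [IsProbabilityMeasure P]
    (n : ℕ) (w : Fin n → ℝ) (hw : ∀ i, w i ∈ Set.Icc (0 : ℝ) 1)
    (N : ℝ) (hN : N = ∑ i, w i)
    (Y : Fin n → Ω → ℝ) (hYmeas : ∀ i, Measurable (Y i))
    (hYindep : iIndepFun Y P)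
    (μ : Measure ℝ) [IsProbabilityMeasure μ]
    (hYlaw : ∀ i, 0 < w i → Measure.map (Y i) P = μ)
    (c h z : ℝ)
    (hint : Integrable (fun y => Real.exp (c * y)) μ)
    (hval : ∫ y, Real.exp (c * y) ∂μ = Real.exp h) :
    P {ω | z + N * h < (∑ i, w i * Y i ω) * c} ≤ ENNReal.ofReal (Real.exp (-z)) := by
  classical
  set X : Fin n → Ω → ℝ := fun i ω => w i * (c * Y i ω) with hX
  have hXmeas : ∀ i, Measurable (X i) := fun i =>
    (measurable_const.mul (measurable_const.mul (hYmeas i)))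
  have hXindep : iIndepFun X P := by
    have := hYindep.comp (g := fun i (x : ℝ) => w i * (c * x))
      (fun i => measurable_const.mul (measurable_const.mul measurable_id))
    exact this
  -- per-factor bounds
  have hfac : ∀ i : Fin n,
      Integrable (fun ω => Real.exp (1 * X i ω)) P ∧
        mgf (X i) P 1 ≤ Real.exp (w i * h) := by
    intro i
    rcases (hw i).1.eq_or_lt with hwi | hwi
    · constructor
      · simp [hX, ← hwi]
      · have : mgf (X i) P 1 = 1 := by
          have : X i = fun _ => (0 : ℝ) := by funext ω; simp [hX, ← hwi]
          rw [this]
          simpa using mgf_const (μ := P) (t := 1) 0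
        rw [this, ← hwi]
        simp
    · have hmap := hYlaw i hwi
      obtain ⟨hintw, hlew⟩ := jensen_exp_pow μ c h (w i) (hw i).1 (hw i).2 hint hval
      have hcomp : (fun ω => Real.exp (w i * (c * Y i ω)))
          = (fun y => Real.exp (w i * (c * y))) ∘ Y i := rfl
      have hmeasg : Measurable fun y => Real.exp (w i * (c * y)) :=
        (measurable_const.mul (measurable_const.mul measurable_id)).exp
      have hintP : Integrable (fun ω => Real.exp (w i * (c * Y i ω))) P := by
        rw [hcomp]
        rw [← hmap] at hintw
        exact (integrable_map_measure hmeasg.aestronglyMeasurable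
          (hYmeas i).aemeasurable).mp hintw
      constructor
      · simpa [hX] using hintP
      · have : mgf (X i) P 1 = ∫ ω, Real.exp (w i * (c * Y i ω)) ∂P := by
          simp [mgf, hX]
        rw [this]
        have heq : ∫ ω, Real.exp (w i * (c * Y i ω)) ∂P
            = ∫ y, Real.exp (w i * (c * y)) ∂μ := by
          rw [← hmap, integral_map (hYmeas i).aemeasurable hmeasg.aestronglyMeasurable]
        rw [heq]
        exact hlew
  -- mgf of the sum
  have hmgf_sum : mgf (∑ i, X i) P 1 = ∏ i, mgf (X i) P 1 :=
    hXindep.mgf_sum hXmeas Finset.univ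
  have hmgf_le : mgf (∑ i, X i) P 1 ≤ Real.exp (N * h) := by
    rw [hmgf_sum]
    calc ∏ i, mgf (X i) P 1 ≤ ∏ i, Real.exp (w i * h) :=
          Finset.prod_le_prod (fun i _ => mgf_nonneg) (fun i _ => (hfac i).2)
      _ = Real.exp (∑ i, w i * h) := by rw [Real.exp_sum]
      _ = Real.exp (N * h) := by rw [← Finset.sum_mul, hN]
  have hintS : Integrable (fun ω => Real.exp (1 * (∑ i, X i) ω)) P :=
    hXindep.integrable_exp_mul_sum hXmeas (fun i _ => (hfac i).1)
  have hchernoff := measure_ge_le_exp_mul_mgf (μ := P) (X := ∑ i, X i)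
    (z + N * h) zero_le_one hintS
  have htail : (P {ω | z + N * h ≤ (∑ i, X i) ω}).toReal ≤ Real.exp (-z) := by
    refine hchernoff.trans ?_
    calc Real.exp (-1 * (z + N * h)) * mgf (∑ i, X i) P 1
        ≤ Real.exp (-1 * (z + N * h)) * Real.exp (N * h) :=
          mul_le_mul_of_nonneg_left hmgf_le (Real.exp_pos _).le
      _ = Real.exp (-z) := by rw [← Real.exp_add]; congr 1; ring
  have hsub : {ω | z + N * h < (∑ i, w i * Y i ω) * c}
      ⊆ {ω | z + N * h ≤ (∑ i, X i) ω} := by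
    intro ω hω
    simp only [Set.mem_setOf_eq] at hω ⊢
    have : (∑ i, X i) ω = (∑ i, w i * Y i ω) * c := by
      simp only [Finset.sum_apply, hX, Finset.sum_mul]
      exact Finset.sum_congr rfl fun i _ => by ring
    rw [this]
    exact hω.le
  calc P {ω | z + N * h < (∑ i, w i * Y i ω) * c}
      ≤ P {ω | z + N * h ≤ (∑ i, X i) ω} := measure_mono hsub
    _ = ENNReal.ofReal ((P {ω | z + N * h ≤ (∑ i, X i) ω}).toReal) :=
        (ENNReal.ofReal_toReal (measure_ne_top P _)).symm
    _ ≤ ENNReal.ofReal (Real.exp (-z)) := ENNReal.ofReal_le_ofReal htail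

/-- exponential bound for the fitted local log-likelihood in the
parametric situation (Theorem 2.2). -/
theorem param_exponential_bound
    (Θ : Set ℝ) (hΘcomp : IsCompact Θ) (hΘconv : Convex ℝ Θ)
    (ν : Measure ℝ) [SigmaFinite ν]
    (q : ℝ → ℝ) (hq : Measurable q) (hqnn : ∀ y, 0 ≤ q y)
    (B C B' C' : ℝ → ℝ)
    (hC : ∀ a ∈ Θ, HasDerivAt C (C' a) a)
    (hB : ∀ a ∈ Θ, HasDerivAt B (B' a) a)
    (hCcont : ContinuousOn C' Θ) (hBcont : ContinuousOn B' Θ)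
    (hCpos : ∀ a ∈ Θ, 0 < C' a)
    (hBeq : ∀ a ∈ Θ, B' a = a * C' a)
    (p : ℝ → ℝ → ℝ) (hp : ∀ y a, p y a = q y * Real.exp (y * C a - B a))
    (Pθ : ℝ → Measure ℝ)
    (hPθ : ∀ a ∈ Θ, Pθ a = ν.withDensity (fun y => ENNReal.ofReal (p y a)))
    (hPθprob : ∀ a ∈ Θ, IsProbabilityMeasure (Pθ a))
    (K : ℝ → ℝ → ℝ)
    (hK : ∀ a b, K a b = a * (C a - C b) - B a + B b)
    {Ω : Type*} [MeasurableSpace Ω] (P : Measure Ω) [IsProbabilityMeasure P]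
    (n : ℕ) (w : Fin n → ℝ) (hw : ∀ i, w i ∈ Set.Icc (0 : ℝ) 1)
    (N : ℝ) (hN : N = ∑ i, w i) (hNpos : 0 < N)
    (θstar : ℝ) (hθstar : θstar ∈ Θ)
    (Y : Fin n → Ω → ℝ) (hYmeas : ∀ i, Measurable (Y i))
    (hYindep : iIndepFun Y P)
    (hYlaw : ∀ i, 0 < w i → Measure.map (Y i) P = Pθ θstar)
    (θt : Ω → ℝ) (hθt : ∀ ω, θt ω = (∑ i, w i * Y i ω) / N)
    (hθtΘ : ∀ᵐ ω ∂P, θt ω ∈ Θ) :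
    ∀ z : ℝ, 0 < z →
      P {ω | z < N * K (θt ω) θstar} ≤ ENNReal.ofReal (2 * Real.exp (-z)) := by
  intro z hz
  haveI : IsProbabilityMeasure (Pθ θstar) := hPθprob θstar hθstar
  -- Θ is a compact interval
  have hΘne : Θ.Nonempty := ⟨θstar, hθstar⟩
  have hΘeq : Θ = Set.Icc (sInf Θ) (sSup Θ) :=
    eq_Icc_of_connected_compact ⟨hΘne, hΘconv.isPreconnected⟩ hΘcomp
  set a := sInf Θ with ha
  set b := sSup Θ with hb
  have hθmem : θstar ∈ Set.Icc a b := hΘeq ▸ hθstar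
  have hab : a ≤ b := hθmem.1.trans hθmem.2
  have haΘ : a ∈ Θ := by rw [hΘeq]; exact Set.left_mem_Icc.2 hab
  have hbΘ : b ∈ Θ := by rw [hΘeq]; exact Set.right_mem_Icc.2 hab
  -- continuity and monotonicity of C
  have hCc : ContinuousOn C Θ := fun x hx => (hC x hx).continuousAt.continuousWithinAt
  have hBc : ContinuousOn B Θ := fun x hx => (hB x hx).continuousAt.continuousWithinAt
  have hCmono : StrictMonoOn C Θ := by
    refine strictMonoOn_of_deriv_pos hΘconv hCc fun x hx => ?_
    have hxΘ := interior_subset hx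
    rw [(hC x hxΘ).deriv]
    exact hCpos x hxΘ
  -- F θ = K θ θstar
  set F : ℝ → ℝ := fun θ => θ * (C θ - C θstar) - B θ + B θstar with hF
  have hKF : ∀ θ, K θ θstar = F θ := fun θ => hK θ θstar
  have hF0 : F θstar = 0 := by simp [hF]
  have hFc : ContinuousOn F Θ :=
    ((continuousOn_id.mul (hCc.sub continuousOn_const)).sub hBc).add continuousOn_const
  have hFderiv : ∀ x ∈ Θ, HasDerivAt F (C x - C θstar) x := by
    intro x hx
    have h1 : HasDerivAt (fun θ => θ * (C θ - C θstar))
        (1 * (C x - C θstar) + x * C' x) x :=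
      (hasDerivAt_id x).mul ((hC x hx).sub_const _)
    have h2 : HasDerivAt F (1 * (C x - C θstar) + x * C' x - B' x) x :=
      (h1.sub (hB x hx)).add_const _
    convert h2 using 1
    rw [hBeq x hx]; ring
  have hFmonoR : StrictMonoOn F (Θ ∩ Set.Ici θstar) := by
    refine strictMonoOn_of_deriv_pos (hΘconv.inter (convex_Ici _))
      (hFc.mono Set.inter_subset_left) fun x hx => ?_
    rw [interior_inter, interior_Ici] at hx
    have hxΘ := interior_subset hx.1
    rw [(hFderiv x hxΘ).deriv]
    exact sub_pos.2 (hCmono hθstar hxΘ hx.2)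
  have hFantiL : StrictAntiOn F (Θ ∩ Set.Iic θstar) := by
    refine strictAntiOn_of_deriv_neg (hΘconv.inter (convex_Iic _))
      (hFc.mono Set.inter_subset_left) fun x hx => ?_
    rw [interior_inter, interior_Iic] at hx
    have hxΘ := interior_subset hx.1
    rw [(hFderiv x hxΘ).deriv]
    exact sub_neg.2 (hCmono hxΘ hθstar hx.2)
  -- events
  set E := {ω | z < N * K (θt ω) θstar} with hE
  have hEeq : E = {ω | z < N * F (θt ω)} := by
    simp only [hE, hKF]
  have hnull : P {ω | θt ω ∉ Θ} = 0 := by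
    rw [← ae_iff] at *
    exact hθtΘ
  -- bound on the right side
  have hright : P (E ∩ {ω | θstar ≤ θt ω}) ≤ ENNReal.ofReal (Real.exp (-z)) := by
    by_cases hcase : z / N ≤ F b
    · -- find θz with F θz = z / N
      have hIcc : Set.Icc θstar b ⊆ Θ := by
        rw [hΘeq]; exact Set.Icc_subset_Icc_left hθmem.1
      have hIVT := intermediate_value_Icc hθmem.2 (hFc.mono hIcc)
      have hzmem : z / N ∈ Set.Icc (F θstar) (F b) := by
        rw [hF0]
        exact ⟨(div_pos hz hNpos).le, hcase⟩
      obtain ⟨θz, hθzmem, hθzval⟩ := hIVT hzmem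
      have hθzΘ : θz ∈ Θ := hIcc hθzmem
      have hθzgt : θstar < θz := by
        rcases hθzmem.1.eq_or_lt with heq | hlt
        · exfalso
          rw [← heq, hF0] at hθzval
          exact absurd hθzval.symm (div_pos hz hNpos).ne'
        · exact hlt
      have hcpos : 0 < C θz - C θstar := sub_pos.2 (hCmono hθstar hθzΘ hθzgt)
      have hNFz : N * F θz = z := by rw [hθzval, mul_div_cancel₀ _ hNpos.ne']
      haveI : IsProbabilityMeasure (Pθ θz) := hPθprob θz hθzΘ
      obtain ⟨hint, hval⟩ := expfam_exp_integral ν q hq hqnn B C p hp Pθ θstar θz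
        (hPθ θstar hθstar) (hPθ θz hθzΘ) (hPθprob θz hθzΘ)
      have hmarkov := markov_core P n w hw N hN Y hYmeas hYindep (Pθ θstar) hYlaw
        (C θz - C θstar) (B θz - B θstar) z hint hval
      have hsub : E ∩ {ω | θstar ≤ θt ω} ⊆ {ω | θt ω ∉ Θ} ∪
          {ω | z + N * (B θz - B θstar) < (∑ i, w i * Y i ω) * (C θz - C θstar)} := by
        intro ω ⟨hωE, hωR⟩
        by_cases hωΘ : θt ω ∈ Θ
        · right
          rw [hEeq] at hωE
          have hωE' : z < N * F (θt ω) := hωE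
          have hθtgt : θz < θt ω := by
            by_contra hle
            push_neg at hle
            have := hFmonoR.monotoneOn ⟨hωΘ, hωR⟩ ⟨hθzΘ, hθzgt.le⟩ hle
            nlinarith
          have hS : ∑ i, w i * Y i ω = N * θt ω := by
            rw [hθt ω]; field_simp
          simp only [Set.mem_setOf_eq, hS]
          have hz' : z + N * (B θz - B θstar) = N * θz * (C θz - C θstar) := by
            rw [← hNFz]; simp only [hF]; ring
          rw [hz']
          have := mul_lt_mul_of_pos_right (mul_lt_mul_of_pos_left hθtgt hNpos) hcpos
          linarith
        · left; exact hωΘ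
      calc P (E ∩ {ω | θstar ≤ θt ω}) ≤ P ({ω | θt ω ∉ Θ} ∪
            {ω | z + N * (B θz - B θstar) < (∑ i, w i * Y i ω) * (C θz - C θstar)}) :=
            measure_mono hsub
        _ ≤ P {ω | θt ω ∉ Θ} + P {ω | z + N * (B θz - B θstar) <
            (∑ i, w i * Y i ω) * (C θz - C θstar)} := measure_union_le _ _
        _ ≤ 0 + ENNReal.ofReal (Real.exp (-z)) := add_le_add hnull.le hmarkov
        _ = ENNReal.ofReal (Real.exp (-z)) := zero_add _
    · -- event is a.e. empty
      push_neg at hcase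
      have hsub : E ∩ {ω | θstar ≤ θt ω} ⊆ {ω | θt ω ∉ Θ} := by
        intro ω ⟨hωE, hωR⟩ hωΘ
        rw [hEeq] at hωE
        have hωE' : z < N * F (θt ω) := hωE
        have hθtb : θt ω ≤ b := (hΘeq ▸ hωΘ).2
        have := hFmonoR.monotoneOn ⟨hωΘ, hωR⟩ ⟨hbΘ, hθmem.2⟩ hθtb
        have hlt : F (θt ω) < z / N := lt_of_le_of_lt this hcase
        have := (lt_div_iff₀' hNpos).mp hlt
        linarith
      calc P (E ∩ {ω | θstar ≤ θt ω}) ≤ P {ω | θt ω ∉ Θ} := measure_mono hsub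
        _ = 0 := hnull
        _ ≤ ENNReal.ofReal (Real.exp (-z)) := zero_le
  -- bound on the left side
  have hleft : P (E ∩ {ω | θt ω < θstar}) ≤ ENNReal.ofReal (Real.exp (-z)) := by
    by_cases hcase : z / N ≤ F a
    · have hIcc : Set.Icc a θstar ⊆ Θ := by
        rw [hΘeq]; exact Set.Icc_subset_Icc_right hθmem.2
      have hIVT := intermediate_value_Icc' hθmem.1 (hFc.mono hIcc)
      have hzmem : z / N ∈ Set.Icc (F θstar) (F a) := by
        rw [hF0]
        exact ⟨(div_pos hz hNpos).le, hcase⟩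
      obtain ⟨θz, hθzmem, hθzval⟩ := hIVT hzmem
      have hθzΘ : θz ∈ Θ := hIcc hθzmem
      have hθzlt : θz < θstar := by
        rcases hθzmem.2.eq_or_lt with heq | hlt
        · exfalso
          rw [heq, hF0] at hθzval
          exact absurd hθzval.symm (div_pos hz hNpos).ne'
        · exact hlt
      have hcneg : C θz - C θstar < 0 := sub_neg.2 (hCmono hθzΘ hθstar hθzlt)
      have hNFz : N * F θz = z := by rw [hθzval, mul_div_cancel₀ _ hNpos.ne']
      haveI : IsProbabilityMeasure (Pθ θz) := hPθprob θz hθzΘ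
      obtain ⟨hint, hval⟩ := expfam_exp_integral ν q hq hqnn B C p hp Pθ θstar θz
        (hPθ θstar hθstar) (hPθ θz hθzΘ) (hPθprob θz hθzΘ)
      have hmarkov := markov_core P n w hw N hN Y hYmeas hYindep (Pθ θstar) hYlaw
        (C θz - C θstar) (B θz - B θstar) z hint hval
      have hsub : E ∩ {ω | θt ω < θstar} ⊆ {ω | θt ω ∉ Θ} ∪
          {ω | z + N * (B θz - B θstar) < (∑ i, w i * Y i ω) * (C θz - C θstar)} := by
        intro ω ⟨hωE, hωL⟩
        by_cases hωΘ : θt ω ∈ Θ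
        · right
          rw [hEeq] at hωE
          have hωE' : z < N * F (θt ω) := hωE
          have hθtlt : θt ω < θz := by
            by_contra hle
            push_neg at hle
            have := hFantiL.antitoneOn ⟨hθzΘ, hθzlt.le⟩ ⟨hωΘ, (Set.mem_setOf_eq ▸ hωL).le⟩ hle
            nlinarith
          have hS : ∑ i, w i * Y i ω = N * θt ω := by
            rw [hθt ω]; field_simp
          simp only [Set.mem_setOf_eq, hS]
          have hz' : z + N * (B θz - B θstar) = N * θz * (C θz - C θstar) := by
            rw [← hNFz]; simp only [hF]; ring
          rw [hz']
          have := mul_lt_mul_of_neg_right (mul_lt_mul_of_pos_left hθtlt hNpos) hcneg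
          linarith
        · left; exact hωΘ
      calc P (E ∩ {ω | θt ω < θstar}) ≤ P ({ω | θt ω ∉ Θ} ∪
            {ω | z + N * (B θz - B θstar) < (∑ i, w i * Y i ω) * (C θz - C θstar)}) :=
            measure_mono hsub
        _ ≤ P {ω | θt ω ∉ Θ} + P {ω | z + N * (B θz - B θstar) <
            (∑ i, w i * Y i ω) * (C θz - C θstar)} := measure_union_le _ _
        _ ≤ 0 + ENNReal.ofReal (Real.exp (-z)) := add_le_add hnull.le hmarkov
        _ = ENNReal.ofReal (Real.exp (-z)) := zero_add _
    · push_neg at hcase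
      have hsub : E ∩ {ω | θt ω < θstar} ⊆ {ω | θt ω ∉ Θ} := by
        intro ω ⟨hωE, hωL⟩ hωΘ
        rw [hEeq] at hωE
        have hωE' : z < N * F (θt ω) := hωE
        have hθta : a ≤ θt ω := (hΘeq ▸ hωΘ).1
        have := hFantiL.antitoneOn ⟨haΘ, hθmem.1⟩ ⟨hωΘ, (Set.mem_setOf_eq ▸ hωL).le⟩ hθta
        have hlt : F (θt ω) < z / N := lt_of_le_of_lt this hcase
        have := (lt_div_iff₀' hNpos).mp hlt
        linarith
      calc P (E ∩ {ω | θt ω < θstar}) ≤ P {ω | θt ω ∉ Θ} := measure_mono hsub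
        _ = 0 := hnull
        _ ≤ ENNReal.ofReal (Real.exp (-z)) := zero_le
  -- combine
  have hsplit : E ⊆ (E ∩ {ω | θstar ≤ θt ω}) ∪ (E ∩ {ω | θt ω < θstar}) := by
    intro ω hω
    rcases le_or_gt θstar (θt ω) with hle | hlt
    · exact Or.inl ⟨hω, hle⟩
    · exact Or.inr ⟨hω, hlt⟩
  calc P E ≤ P ((E ∩ {ω | θstar ≤ θt ω}) ∪ (E ∩ {ω | θt ω < θstar})) := measure_mono hsplit
    _ ≤ P (E ∩ {ω | θstar ≤ θt ω}) + P (E ∩ {ω | θt ω < θstar}) := measure_union_le _ _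
    _ ≤ ENNReal.ofReal (Real.exp (-z)) + ENNReal.ofReal (Real.exp (-z)) :=
        add_le_add hright hleft
    _ = ENNReal.ofReal (2 * Real.exp (-z)) := by
        rw [← ENNReal.ofReal_add (Real.exp_pos _).le (Real.exp_pos _).le]
        congr 1; ring
end

section
/- Let w_1,…,w_n ∈ [0,1] with N := Σ_{i=1}^n w_i > 0, let θ* ∈ Θ, and let Y_1,…,Y_n be independent random variables such that Y_i has law P_{θ*} for every i with w_i > 0. Set θ̃ := Σ_{i=1}^n w_i·Y_i / N and assume θ̃ ∈ Θ almost surely. If α ∈ (0,1) and z_α > 0 satisfies 2·e^{−z_α} ≤ α, then the set E_α := {θ' ∈ Θ : N·K(θ̃, θ') ≤ z_α} is an α-confidence set: P(θ* ∈ E_α) ≥ 1 − α. -/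
open MeasureTheory ProbabilityTheory Real BigOperators

private lemma exp_lintegral_aux {ν : Measure ℝ}
    {q : ℝ → ℝ} (hq : Measurable q) (hqnn : ∀ y, 0 ≤ q y)
    {B C : ℝ → ℝ} {p : ℝ → ℝ → ℝ}
    (hp : ∀ y a, p y a = q y * Real.exp (y * C a - B a))
    {Pθ : ℝ → Measure ℝ} {θ0 θc : ℝ}
    (hP0 : Pθ θ0 = ν.withDensity (fun y => ENNReal.ofReal (p y θ0)))
    (hPc : Pθ θc = ν.withDensity (fun y => ENNReal.ofReal (p y θc)))
    (hprobc : IsProbabilityMeasure (Pθ θc))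
    {c : ℝ} (hc : C θc = C θ0 + c) :
    ∫⁻ y, ENNReal.ofReal (Real.exp (c * y)) ∂(Pθ θ0)
      = ENNReal.ofReal (Real.exp (B θc - B θ0)) := by
  have hpnn : ∀ y a, 0 ≤ p y a := fun y a => by rw [hp]; exact mul_nonneg (hqnn y) (Real.exp_nonneg _)
  have hmeasp : ∀ a, Measurable fun y => ENNReal.ofReal (p y a) := by
    intro a
    apply Measurable.ennreal_ofReal
    simp only [hp]
    exact hq.mul ((measurable_id.mul_const _).sub_const _).exp
  have hmeasg : Measurable fun y => ENNReal.ofReal (Real.exp (c * y)) :=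
    ((measurable_const.mul measurable_id).exp).ennreal_ofReal
  have hreal : ∀ y, p y θ0 * Real.exp (c * y)
      = Real.exp (B θc - B θ0) * p y θc := by
    intro y
    rw [hp, hp, hc, mul_assoc, ← Real.exp_add]
    conv_rhs => rw [mul_left_comm, ← Real.exp_add]
    congr 1
    ring
  have hone : ∫⁻ y, ENNReal.ofReal (p y θc) ∂ν = 1 := by
    have h := hprobc.measure_univ
    rwa [hPc, withDensity_apply _ MeasurableSet.univ, setLIntegral_univ] at h
  rw [hP0, lintegral_withDensity_eq_lintegral_mul ν (hmeasp θ0) hmeasg]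
  calc ∫⁻ y, ((fun y => ENNReal.ofReal (p y θ0)) * fun y => ENNReal.ofReal (Real.exp (c * y))) y ∂ν
      = ∫⁻ y, ENNReal.ofReal (Real.exp (B θc - B θ0)) * ENNReal.ofReal (p y θc) ∂ν := by
        refine lintegral_congr fun y => ?_
        rw [Pi.mul_apply, ← ENNReal.ofReal_mul (hpnn y θ0), hreal y,
          ENNReal.ofReal_mul (Real.exp_nonneg _)]
    _ = ENNReal.ofReal (Real.exp (B θc - B θ0)) := by
        rw [lintegral_const_mul _ (hmeasp θc), hone, mul_one]

private lemma exp_integral_aux {ν : Measure ℝ}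
    {q : ℝ → ℝ} (hq : Measurable q) (hqnn : ∀ y, 0 ≤ q y)
    {B C : ℝ → ℝ} {p : ℝ → ℝ → ℝ}
    (hp : ∀ y a, p y a = q y * Real.exp (y * C a - B a))
    {Pθ : ℝ → Measure ℝ} {θ0 θc : ℝ}
    (hP0 : Pθ θ0 = ν.withDensity (fun y => ENNReal.ofReal (p y θ0)))
    (hPc : Pθ θc = ν.withDensity (fun y => ENNReal.ofReal (p y θc)))
    (hprobc : IsProbabilityMeasure (Pθ θc))
    {c : ℝ} (hc : C θc = C θ0 + c) :
    Integrable (fun y => Real.exp (c * y)) (Pθ θ0) ∧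
      ∫ y, Real.exp (c * y) ∂(Pθ θ0) = Real.exp (B θc - B θ0) := by
  have key := exp_lintegral_aux hq hqnn hp hP0 hPc hprobc hc
  have hsm : AEStronglyMeasurable (fun y => Real.exp (c * y)) (Pθ θ0) :=
    (Real.continuous_exp.comp (continuous_const.mul continuous_id)).aestronglyMeasurable
  have hnn : 0 ≤ᵐ[Pθ θ0] fun y => Real.exp (c * y) :=
    Filter.Eventually.of_forall fun y => Real.exp_nonneg _
  constructor
  · refine ⟨hsm, ?_⟩
    rw [hasFiniteIntegral_iff_ofReal hnn, key]
    exact ENNReal.ofReal_lt_top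
  · rw [integral_eq_lintegral_of_nonneg_ae hnn hsm, key,
      ENNReal.toReal_ofReal (Real.exp_nonneg _)]

private lemma chord_aux {Θ : Set ℝ} (hΘconv : Convex ℝ Θ) {B C B' C' : ℝ → ℝ}
    (hC : ∀ a ∈ Θ, HasDerivAt C (C' a) a)
    (hB : ∀ a ∈ Θ, HasDerivAt B (B' a) a)
    (hCpos : ∀ a ∈ Θ, 0 < C' a)
    (hBeq : ∀ a ∈ Θ, B' a = a * C' a)
    {x y θc : ℝ} (hx : x ∈ Θ) (hy : y ∈ Θ) (hxy : x < y)
    (hθc : θc ∈ Set.Icc x y)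
    {s : ℝ} (hCs : C θc = C x + s * (C y - C x)) :
    B θc ≤ B x + s * (B y - B x) := by
  have hsub : Set.Icc x y ⊆ Θ := hΘconv.ordConnected.out hx hy
  have hCcont : ContinuousOn C Θ := fun a ha => (hC a ha).continuousAt.continuousWithinAt
  -- C strictly monotone on Θ
  have hCmono : StrictMonoOn C Θ := by
    refine strictMonoOn_of_deriv_pos hΘconv hCcont fun t ht => ?_
    have ht' : t ∈ Θ := interior_subset ht
    rw [(hC t ht').deriv]; exact hCpos t ht'
  have hCyx : 0 < C y - C x := sub_pos.2 (hCmono hx hy hxy)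
  set m : ℝ := (B y - B x) / (C y - C x) with hm
  set h : ℝ → ℝ := fun t => B t - B x - m * (C t - C x) with hh
  have hderiv : ∀ t ∈ Θ, HasDerivAt h (C' t * (t - m)) t := by
    intro t ht
    have : HasDerivAt h (B' t - m * C' t) t := by
      exact ((hB t ht).sub_const (B x)).sub (((hC t ht).sub_const (C x)).const_mul m)
    convert this using 1
    rw [hBeq t ht]; ring
  have hcont : ContinuousOn h Θ := fun a ha => (hderiv a ha).continuousAt.continuousWithinAt
  have hhx : h x = 0 := by simp [hh]
  have hhy : h y = 0 := by
    simp only [hh, hm]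
    rw [div_mul_cancel₀ _ hCyx.ne']
    ring
  have hhθc : h θc ≤ 0 := by
    rcases le_total θc m with hcm | hmc
    · -- antitone on Icc x θc
      have hanti : AntitoneOn h (Set.Icc x θc) := by
        refine antitoneOn_of_deriv_nonpos (convex_Icc x θc)
          (hcont.mono (fun t ht => hsub ⟨ht.1, ht.2.trans hθc.2⟩)) ?_ ?_
        · intro t ht
          have ht' : t ∈ Θ := hsub ⟨(interior_subset ht).1, (interior_subset ht).2.trans hθc.2⟩
          exact (hderiv t ht').differentiableAt.differentiableWithinAt
        · intro t ht
          rw [interior_Icc] at ht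
          have ht' : t ∈ Θ := hsub ⟨ht.1.le, ht.2.le.trans hθc.2⟩
          rw [(hderiv t ht').deriv]
          have := hCpos t ht'
          nlinarith [ht.2.trans_le hcm]
      have := hanti ⟨le_refl x, hθc.1⟩ ⟨hθc.1, le_refl θc⟩ hθc.1
      rwa [hhx] at this
    · have hmono : MonotoneOn h (Set.Icc θc y) := by
        refine monotoneOn_of_deriv_nonneg (convex_Icc θc y)
          (hcont.mono (fun t ht => hsub ⟨hθc.1.trans ht.1, ht.2⟩)) ?_ ?_
        · intro t ht
          have ht' : t ∈ Θ := hsub ⟨hθc.1.trans (interior_subset ht).1, (interior_subset ht).2⟩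
          exact (hderiv t ht').differentiableAt.differentiableWithinAt
        · intro t ht
          rw [interior_Icc] at ht
          have ht' : t ∈ Θ := hsub ⟨hθc.1.trans ht.1.le, ht.2.le⟩
          rw [(hderiv t ht').deriv]
          have := hCpos t ht'
          nlinarith [hmc.trans_lt ht.1]
      have := hmono ⟨le_refl θc, hθc.2⟩ ⟨hθc.2, le_refl y⟩ hθc.2
      rwa [hhy] at this
  have h2 : B θc - B x - m * (C θc - C x) ≤ 0 := hhθc
  have : B θc - B x ≤ m * (C θc - C x) := by linarith
  have hCc : C θc - C x = s * (C y - C x) := by linarith [hCs]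
  rw [hCc, hm] at this
  calc B θc ≤ B x + (B y - B x) / (C y - C x) * (s * (C y - C x)) := by linarith
    _ = B x + s * (B y - B x) := by field_simp

private lemma term_exists {Θ : Set ℝ} (hΘconv : Convex ℝ Θ) {B C B' C' : ℝ → ℝ}
    (hC : ∀ a ∈ Θ, HasDerivAt C (C' a) a)
    (hB : ∀ a ∈ Θ, HasDerivAt B (B' a) a)
    (hCpos : ∀ a ∈ Θ, 0 < C' a)
    (hBeq : ∀ a ∈ Θ, B' a = a * C' a)
    {θstar v : ℝ} (hθstar : θstar ∈ Θ) (hv : v ∈ Θ)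
    {w : ℝ} (hw : w ∈ Set.Icc (0:ℝ) 1) :
    ∃ θc ∈ Θ, C θc = C θstar + w * (C v - C θstar)
      ∧ B θc - B θstar ≤ w * (B v - B θstar) := by
  have hCcont : ContinuousOn C Θ := fun a ha => (hC a ha).continuousAt.continuousWithinAt
  have hCmono : StrictMonoOn C Θ := by
    refine strictMonoOn_of_deriv_pos hΘconv hCcont fun t ht => ?_
    have ht' : t ∈ Θ := interior_subset ht
    rw [(hC t ht').deriv]; exact hCpos t ht'
  rcases lt_trichotomy θstar v with hlt | heq | hgt
  · have hsub : Set.Icc θstar v ⊆ Θ := hΘconv.ordConnected.out hθstar hv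
    have hCv : C θstar < C v := hCmono hθstar hv hlt
    have hval : C θstar + w * (C v - C θstar) ∈ Set.Icc (C θstar) (C v) := by
      constructor <;> nlinarith [hw.1, hw.2]
    obtain ⟨θc, hθcmem, hθcC⟩ := intermediate_value_Icc hlt.le (hCcont.mono hsub) hval
    refine ⟨θc, hsub hθcmem, hθcC, ?_⟩
    have := chord_aux hΘconv hC hB hCpos hBeq hθstar hv hlt hθcmem (s := w) hθcC
    linarith
  · refine ⟨θstar, hθstar, by rw [← heq]; ring, by rw [← heq]; simp⟩
  · have hsub : Set.Icc v θstar ⊆ Θ := hΘconv.ordConnected.out hv hθstar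
    have hCv : C v < C θstar := hCmono hv hθstar hgt
    have hval : C θstar + w * (C v - C θstar) ∈ Set.Icc (C v) (C θstar) := by
      constructor <;> nlinarith [hw.1, hw.2]
    obtain ⟨θc, hθcmem, hθcC⟩ := intermediate_value_Icc hgt.le (hCcont.mono hsub) hval
    refine ⟨θc, hsub hθcmem, hθcC, ?_⟩
    have hCs : C θc = C v + (1 - w) * (C θstar - C v) := by rw [hθcC]; ring
    have := chord_aux hΘconv hC hB hCpos hBeq hv hθstar hgt hθcmem (s := 1 - w) hCs
    nlinarith []

private lemma side_aux {Θ : Set ℝ} (hΘconv : Convex ℝ Θ)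
    {ν : Measure ℝ} {q : ℝ → ℝ} (hq : Measurable q) (hqnn : ∀ y, 0 ≤ q y)
    {B C B' C' : ℝ → ℝ}
    (hC : ∀ a ∈ Θ, HasDerivAt C (C' a) a)
    (hB : ∀ a ∈ Θ, HasDerivAt B (B' a) a)
    (hCpos : ∀ a ∈ Θ, 0 < C' a)
    (hBeq : ∀ a ∈ Θ, B' a = a * C' a)
    {p : ℝ → ℝ → ℝ} (hp : ∀ y a, p y a = q y * Real.exp (y * C a - B a))
    {Pθ : ℝ → Measure ℝ}
    (hPθ : ∀ a ∈ Θ, Pθ a = ν.withDensity (fun y => ENNReal.ofReal (p y a)))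
    (hPθprob : ∀ a ∈ Θ, IsProbabilityMeasure (Pθ a))
    {Ω : Type*} [MeasurableSpace Ω] {P : Measure Ω} [IsProbabilityMeasure P]
    {n : ℕ} {w : Fin n → ℝ} (hw : ∀ i, w i ∈ Set.Icc (0:ℝ) 1)
    {Y : Fin n → Ω → ℝ} (hYmeas : ∀ i, Measurable (Y i))
    (hYindep : iIndepFun Y P)
    {θstar : ℝ} (hθstar : θstar ∈ Θ)
    (hYlaw : ∀ i, 0 < w i → Measure.map (Y i) P = Pθ θstar)
    {v : ℝ} (hv : v ∈ Θ) :
    Integrable (fun ω => Real.exp ((C v - C θstar) * (∑ i, w i * Y i ω))) P ∧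
      mgf (fun ω => ∑ i, w i * Y i ω) P (C v - C θstar)
        ≤ Real.exp ((∑ i, w i) * (B v - B θstar)) := by
  set t : ℝ := C v - C θstar with ht
  set D : ℝ := B v - B θstar with hD
  set Xi : Fin n → Ω → ℝ := fun i ω => w i * Y i ω with hXi
  have hXimeas : ∀ i, Measurable (Xi i) := fun i => (hYmeas i).const_mul _
  have hindep : iIndepFun Xi P := by
    have := hYindep.comp (fun i => fun y : ℝ => w i * y)
      (fun i => measurable_id.const_mul (w i))
    exact this
  have hterm : ∀ i, Integrable (fun ω => Real.exp (t * Xi i ω)) P ∧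
      mgf (Xi i) P t ≤ Real.exp (w i * D) := by
    intro i
    rcases (hw i).1.eq_or_lt with h0 | hpos
    · constructor
      · have : (fun ω => Real.exp (t * Xi i ω)) = fun _ => (1:ℝ) := by
          funext ω; simp [hXi, ← h0]
        rw [this]; exact integrable_const 1
      · have : mgf (Xi i) P t = 1 := by
          have h1 : (fun ω => Real.exp (t * Xi i ω)) = fun _ => (1:ℝ) := by
            funext ω; simp [hXi, ← h0]
          simp only [mgf]
          rw [h1]
          simp
        rw [this, ← h0]
        simp
    · obtain ⟨θc, hθcΘ, hθcC, hθcB⟩ :=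
        term_exists hΘconv hC hB hCpos hBeq hθstar hv (hw i)
      have hc : C θc = C θstar + t * w i := by rw [hθcC]; ring
      have key := exp_integral_aux hq hqnn hp (hPθ θstar hθstar) (hPθ θc hθcΘ)
        (hPθprob θc hθcΘ) hc
      have hmap := hYlaw i hpos
      have hsm : AEStronglyMeasurable (fun y => Real.exp ((t * w i) * y))
          (Measure.map (Y i) P) :=
        (Real.continuous_exp.comp (continuous_const.mul continuous_id)).aestronglyMeasurable
      have hint : Integrable (fun ω => Real.exp ((t * w i) * Y i ω)) P := by
        have := (integrable_map_measure hsm (hYmeas i).aemeasurable).mp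
          (by rw [hmap]; exact key.1)
        exact this
      have heqfun : (fun ω => Real.exp (t * Xi i ω))
          = fun ω => Real.exp ((t * w i) * Y i ω) := by
        funext ω; congr 1; simp only [hXi]; ring
      constructor
      · rw [heqfun]; exact hint
      · have hval : mgf (Xi i) P t = ∫ y, Real.exp ((t * w i) * y) ∂(Pθ θstar) := by
          rw [← hmap, integral_map (hYmeas i).aemeasurable hsm]
          simp only [mgf]
          rw [heqfun]
        rw [hval, key.2]
        exact Real.exp_le_exp.mpr hθcB
  have hXsum : (fun ω => ∑ i, w i * Y i ω) = ∑ i, Xi i := by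
    funext ω; simp [hXi, Finset.sum_apply]
  constructor
  · have hint := hindep.integrable_exp_mul_sum hXimeas (s := Finset.univ)
      (fun i _ => (hterm i).1)
    have : (fun ω => Real.exp (t * (∑ i, w i * Y i ω)))
        = fun ω => Real.exp (t * (∑ i, Xi i) ω) := by
      funext ω; simp [hXi, Finset.sum_apply]
    rw [this]; exact hint
  · rw [hXsum]
    calc mgf (∑ i, Xi i) P t = ∏ i, mgf (Xi i) P t := hindep.mgf_sum hXimeas Finset.univ
      _ ≤ ∏ i, Real.exp (w i * D) :=
          Finset.prod_le_prod (fun i _ => mgf_nonneg) (fun i _ => (hterm i).2)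
      _ = Real.exp (∑ i, w i * D) := (Real.exp_sum _ _).symm
      _ = Real.exp ((∑ i, w i) * D) := by rw [← Finset.sum_mul]

/-- the Kullback–Leibler ball around the local MLE is an
α-confidence set (Theorem 2.3). -/
theorem KL_ball_confidence_set
    (Θ : Set ℝ) (hΘcomp : IsCompact Θ) (hΘconv : Convex ℝ Θ)
    (ν : Measure ℝ) [SigmaFinite ν]
    (q : ℝ → ℝ) (hq : Measurable q) (hqnn : ∀ y, 0 ≤ q y)
    (B C B' C' : ℝ → ℝ)
    (hC : ∀ a ∈ Θ, HasDerivAt C (C' a) a)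
    (hB : ∀ a ∈ Θ, HasDerivAt B (B' a) a)
    (hCcont : ContinuousOn C' Θ) (hBcont : ContinuousOn B' Θ)
    (hCpos : ∀ a ∈ Θ, 0 < C' a)
    (hBeq : ∀ a ∈ Θ, B' a = a * C' a)
    (p : ℝ → ℝ → ℝ) (hp : ∀ y a, p y a = q y * Real.exp (y * C a - B a))
    (Pθ : ℝ → Measure ℝ)
    (hPθ : ∀ a ∈ Θ, Pθ a = ν.withDensity (fun y => ENNReal.ofReal (p y a)))
    (hPθprob : ∀ a ∈ Θ, IsProbabilityMeasure (Pθ a))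
    (K : ℝ → ℝ → ℝ)
    (hK : ∀ a b, K a b = a * (C a - C b) - B a + B b)
    {Ω : Type*} [MeasurableSpace Ω] (P : Measure Ω) [IsProbabilityMeasure P]
    (n : ℕ) (w : Fin n → ℝ) (hw : ∀ i, w i ∈ Set.Icc (0 : ℝ) 1)
    (N : ℝ) (hN : N = ∑ i, w i) (hNpos : 0 < N)
    (θstar : ℝ) (hθstar : θstar ∈ Θ)
    (Y : Fin n → Ω → ℝ) (hYmeas : ∀ i, Measurable (Y i))
    (hYindep : iIndepFun Y P)
    (hYlaw : ∀ i, 0 < w i → Measure.map (Y i) P = Pθ θstar)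
    (θt : Ω → ℝ) (hθt : ∀ ω, θt ω = (∑ i, w i * Y i ω) / N)
    (hθtΘ : ∀ᵐ ω ∂P, θt ω ∈ Θ)
    (α zα : ℝ) (hα : α ∈ Set.Ioo (0 : ℝ) 1) (hzα : 0 < zα)
    (hzαα : 2 * Real.exp (-zα) ≤ α) :
    ENNReal.ofReal (1 - α) ≤ P {ω | θstar ∈ {θ' ∈ Θ | N * K (θt ω) θ' ≤ zα}} := by
  obtain ⟨hα0, hα1⟩ := hα
  have hCcont' : ContinuousOn C Θ := fun x hx => (hC x hx).continuousAt.continuousWithinAt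
  have hCmono : StrictMonoOn C Θ := by
    refine strictMonoOn_of_deriv_pos hΘconv hCcont' fun s hs => ?_
    have hs' : s ∈ Θ := interior_subset hs
    rw [(hC s hs').deriv]; exact hCpos s hs'
  have hΘne : Θ.Nonempty := ⟨θstar, hθstar⟩
  set a := sInf Θ with ha
  set b := sSup Θ with hb
  have haΘ : a ∈ Θ := hΘcomp.sInf_mem hΘne
  have hbΘ : b ∈ Θ := hΘcomp.sSup_mem hΘne
  have hle : ∀ θ ∈ Θ, a ≤ θ ∧ θ ≤ b := fun θ hθ =>
    ⟨csInf_le hΘcomp.bddBelow hθ, le_csSup hΘcomp.bddAbove hθ⟩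
  have hstara := (hle θstar hθstar).1
  have hstarb := (hle θstar hθstar).2
  set g : ℝ → ℝ := fun θ => θ * (C θ - C θstar) - B θ + B θstar with hg
  have hKg : ∀ θ, K θ θstar = g θ := fun θ => by rw [hK]
  have hgθstar : g θstar = 0 := by simp [hg]
  have hgderiv : ∀ s ∈ Θ, HasDerivAt g (C s - C θstar) s := by
    intro s hs
    have h1 : HasDerivAt (fun θ => θ * (C θ - C θstar)) (1 * (C s - C θstar) + s * C' s) s :=
      (hasDerivAt_id s).mul ((hC s hs).sub_const _)
    have h2 := (h1.sub (hB s hs)).add_const (B θstar)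
    refine h2.congr_deriv ?_
    rw [hBeq s hs]; ring
  have hgcont : ContinuousOn g Θ := fun x hx => (hgderiv x hx).continuousAt.continuousWithinAt
  have hsubR : Set.Icc θstar b ⊆ Θ := hΘconv.ordConnected.out hθstar hbΘ
  have hsubL : Set.Icc a θstar ⊆ Θ := hΘconv.ordConnected.out haΘ hθstar
  have hgmono : MonotoneOn g (Set.Icc θstar b) := by
    refine monotoneOn_of_deriv_nonneg (convex_Icc _ _) (hgcont.mono hsubR) ?_ ?_
    · intro s hs; rw [interior_Icc] at hs
      exact (hgderiv s (hsubR ⟨hs.1.le, hs.2.le⟩)).differentiableAt.differentiableWithinAt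
    · intro s hs; rw [interior_Icc] at hs
      have hsΘ := hsubR ⟨hs.1.le, hs.2.le⟩
      rw [(hgderiv s hsΘ).deriv]
      have := hCmono hθstar hsΘ hs.1
      linarith
  have hganti : AntitoneOn g (Set.Icc a θstar) := by
    refine antitoneOn_of_deriv_nonpos (convex_Icc _ _) (hgcont.mono hsubL) ?_ ?_
    · intro s hs; rw [interior_Icc] at hs
      exact (hgderiv s (hsubL ⟨hs.1.le, hs.2.le⟩)).differentiableAt.differentiableWithinAt
    · intro s hs; rw [interior_Icc] at hs
      have hsΘ := hsubL ⟨hs.1.le, hs.2.le⟩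
      rw [(hgderiv s hsΘ).deriv]
      have := hCmono hsΘ hθstar hs.2
      linarith
  have hXmeas : Measurable (fun ω => ∑ i, w i * Y i ω) :=
    Finset.measurable_sum _ (fun i _ => (hYmeas i).const_mul _)
  have hXθt : ∀ ω, (∑ i, w i * Y i ω) = N * θt ω := by
    intro ω; rw [hθt ω]; field_simp
  -- right tail
  have key_right : ∃ A : Set Ω, MeasurableSet A ∧ P A ≤ ENNReal.ofReal (Real.exp (-zα)) ∧
      ∀ ω, θt ω ∈ Θ → θstar ≤ θt ω → zα < N * K (θt ω) θstar → ω ∈ A := by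
    by_cases hcase : zα < N * g b
    · have hzN : zα / N ∈ Set.Icc (g θstar) (g b) := by
        constructor
        · rw [hgθstar]; positivity
        · rw [div_le_iff₀ hNpos]; nlinarith
      obtain ⟨u, humem, hgu⟩ := intermediate_value_Icc hstarb (hgcont.mono hsubR) hzN
      have huΘ : u ∈ Θ := hsubR humem
      have hNg : N * g u = zα := by rw [hgu]; field_simp
      have hlam : 0 ≤ C u - C θstar :=
        sub_nonneg.2 (hCmono.monotoneOn hθstar huΘ humem.1)
      obtain ⟨hint, hmgf⟩ := side_aux hΘconv hq hqnn hC hB hCpos hBeq hp hPθ hPθprob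
        hw hYmeas hYindep hθstar hYlaw huΘ
      refine ⟨{ω | N * u ≤ ∑ i, w i * Y i ω}, measurableSet_le measurable_const hXmeas, ?_, ?_⟩
      · rw [ENNReal.le_ofReal_iff_toReal_le (measure_ne_top P _) (Real.exp_nonneg _)]
        have hch := measure_ge_le_exp_mul_mgf (μ := P) (X := fun ω => ∑ i, w i * Y i ω)
          (N * u) hlam hint
        refine hch.trans ?_
        calc Real.exp (-(C u - C θstar) * (N * u)) *
              mgf (fun ω => ∑ i, w i * Y i ω) P (C u - C θstar)
            ≤ Real.exp (-(C u - C θstar) * (N * u)) *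
              Real.exp ((∑ i, w i) * (B u - B θstar)) := by
              exact mul_le_mul_of_nonneg_left hmgf (Real.exp_nonneg _)
          _ = Real.exp (N * (B u - B θstar) - (C u - C θstar) * (N * u)) := by
              rw [← Real.exp_add, ← hN]; ring_nf
          _ = Real.exp (-zα) := by
              congr 1
              simp only [hg] at hNg
              linear_combination -hNg
      · intro ω hωΘ hωge hωK
        rw [hKg] at hωK
        have hθb := (hle _ hωΘ).2
        have hule : u ≤ θt ω := by
          by_contra hlt; push_neg at hlt
          have h2 := hgmono ⟨hωge, hθb⟩ humem hlt.le
          rw [hgu] at h2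
          have h3 : N * g (θt ω) ≤ N * (zα / N) := mul_le_mul_of_nonneg_left h2 hNpos.le
          have h4 : N * (zα / N) = zα := by field_simp
          exact ((h3.trans h4.le).not_gt hωK).elim
        show N * u ≤ ∑ i, w i * Y i ω
        rw [hXθt]
        exact mul_le_mul_of_nonneg_left hule hNpos.le
    · refine ⟨∅, MeasurableSet.empty, by simp, ?_⟩
      intro ω hωΘ hωge hωK
      exfalso
      rw [hKg] at hωK
      have hθb := (hle _ hωΘ).2
      have h1 : g (θt ω) ≤ g b := hgmono ⟨hωge, hθb⟩ ⟨hstarb, le_refl b⟩ hθb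
      push_neg at hcase
      nlinarith
  -- left tail
  have key_left : ∃ A : Set Ω, MeasurableSet A ∧ P A ≤ ENNReal.ofReal (Real.exp (-zα)) ∧
      ∀ ω, θt ω ∈ Θ → θt ω ≤ θstar → zα < N * K (θt ω) θstar → ω ∈ A := by
    by_cases hcase : zα < N * g a
    · have hzN : zα / N ∈ Set.Icc (g θstar) (g a) := by
        constructor
        · rw [hgθstar]; positivity
        · rw [div_le_iff₀ hNpos]; nlinarith
      obtain ⟨l, hlmem, hgl⟩ := intermediate_value_Icc' hstara (hgcont.mono hsubL) hzN
      have hlΘ : l ∈ Θ := hsubL hlmem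
      have hNg : N * g l = zα := by rw [hgl]; field_simp
      have hlam : C l - C θstar ≤ 0 :=
        sub_nonpos.2 (hCmono.monotoneOn hlΘ hθstar hlmem.2)
      obtain ⟨hint, hmgf⟩ := side_aux hΘconv hq hqnn hC hB hCpos hBeq hp hPθ hPθprob
        hw hYmeas hYindep hθstar hYlaw hlΘ
      refine ⟨{ω | (∑ i, w i * Y i ω) ≤ N * l}, measurableSet_le hXmeas measurable_const, ?_, ?_⟩
      · rw [ENNReal.le_ofReal_iff_toReal_le (measure_ne_top P _) (Real.exp_nonneg _)]
        have hch := measure_le_le_exp_mul_mgf (μ := P) (X := fun ω => ∑ i, w i * Y i ω)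
          (N * l) hlam hint
        refine hch.trans ?_
        calc Real.exp (-(C l - C θstar) * (N * l)) *
              mgf (fun ω => ∑ i, w i * Y i ω) P (C l - C θstar)
            ≤ Real.exp (-(C l - C θstar) * (N * l)) *
              Real.exp ((∑ i, w i) * (B l - B θstar)) := by
              exact mul_le_mul_of_nonneg_left hmgf (Real.exp_nonneg _)
          _ = Real.exp (N * (B l - B θstar) - (C l - C θstar) * (N * l)) := by
              rw [← Real.exp_add, ← hN]; ring_nf
          _ = Real.exp (-zα) := by
              congr 1
              simp only [hg] at hNg
              linear_combination -hNg
      · intro ω hωΘ hωle hωK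
        rw [hKg] at hωK
        have hθa := (hle _ hωΘ).1
        have hlle : θt ω ≤ l := by
          by_contra hlt; push_neg at hlt
          have h2 := hganti hlmem ⟨hθa, hωle⟩ hlt.le
          rw [hgl] at h2
          have h3 : N * g (θt ω) ≤ N * (zα / N) := mul_le_mul_of_nonneg_left h2 hNpos.le
          have h4 : N * (zα / N) = zα := by field_simp
          exact ((h3.trans h4.le).not_gt hωK).elim
        show (∑ i, w i * Y i ω) ≤ N * l
        rw [hXθt]
        exact mul_le_mul_of_nonneg_left hlle hNpos.le
    · refine ⟨∅, MeasurableSet.empty, by simp, ?_⟩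
      intro ω hωΘ hωle hωK
      exfalso
      rw [hKg] at hωK
      have hθa := (hle _ hωΘ).1
      have h1 : g (θt ω) ≤ g a := hganti ⟨le_refl a, hstara⟩ ⟨hθa, hωle⟩ hθa
      push_neg at hcase
      nlinarith
  obtain ⟨A1, hA1m, hA1le, hA1cov⟩ := key_right
  obtain ⟨A2, hA2m, hA2le, hA2cov⟩ := key_left
  have hθtmeas : Measurable θt := by
    have hfe : θt = fun ω => (∑ i, w i * Y i ω) / N := funext hθt
    rw [hfe]
    exact hXmeas.div_const N
  set Aout : Set Ω := {ω | θt ω ∉ Θ} with hAout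
  have hAoutm : MeasurableSet Aout := (hθtmeas hΘcomp.isClosed.measurableSet).compl
  have hAout0 : P Aout = 0 := ae_iff.mp hθtΘ
  have hUm : MeasurableSet (Aout ∪ A1 ∪ A2) := (hAoutm.union hA1m).union hA2m
  have hUP : P (Aout ∪ A1 ∪ A2) ≤ ENNReal.ofReal α := by
    calc P (Aout ∪ A1 ∪ A2) ≤ P (Aout ∪ A1) + P A2 := measure_union_le _ _
      _ ≤ (P Aout + P A1) + P A2 := add_le_add_left (measure_union_le _ _) _
      _ ≤ (0 + ENNReal.ofReal (Real.exp (-zα))) + ENNReal.ofReal (Real.exp (-zα)) :=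
          add_le_add (add_le_add hAout0.le hA1le) hA2le
      _ = ENNReal.ofReal (2 * Real.exp (-zα)) := by
          rw [zero_add, ← ENNReal.ofReal_add (Real.exp_nonneg _) (Real.exp_nonneg _)]
          congr 1; ring
      _ ≤ ENNReal.ofReal α := ENNReal.ofReal_le_ofReal hzαα
  have hcov : (Aout ∪ A1 ∪ A2)ᶜ ⊆ {ω | θstar ∈ {θ' ∈ Θ | N * K (θt ω) θ' ≤ zα}} := by
    intro ω hω
    simp only [Set.mem_compl_iff, Set.mem_union, not_or] at hω
    obtain ⟨⟨hout, h1⟩, h2⟩ := hω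
    have hθΘ : θt ω ∈ Θ := not_not.mp hout
    simp only [Set.mem_setOf_eq, Set.mem_sep_iff]
    refine ⟨hθstar, ?_⟩
    by_contra hgt; push_neg at hgt
    rcases le_total θstar (θt ω) with hge | hle'
    · exact h1 (hA1cov ω hθΘ hge hgt)
    · exact h2 (hA2cov ω hθΘ hle' hgt)
  calc ENNReal.ofReal (1 - α) = 1 - ENNReal.ofReal α := by
        rw [ENNReal.ofReal_sub _ hα0.le, ENNReal.ofReal_one]
    _ ≤ 1 - P (Aout ∪ A1 ∪ A2) := tsub_le_tsub_left hUP 1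
    _ = P (Aout ∪ A1 ∪ A2)ᶜ := (prob_compl_eq_one_sub hUm).symm
    _ ≤ P {ω | θstar ∈ {θ' ∈ Θ | N * K (θt ω) θ' ≤ zα}} := measure_mono hcov
end

section
/- Let w_1,…,w_n ∈ [0,1] with N := Σ_{i=1}^n w_i > 0, let θ* ∈ Θ, and let Y_1,…,Y_n be i.i.d. with law P_{θ*}. Set θ̃ := Σ_{i=1}^n w_i·Y_i / N and assume θ̃ ∈ Θ almost surely. Then for every r > 0, E[(N·K(θ̃, θ*))^r] ≤ τ_r, where τ_r := 2·r·Γ(r). -/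
open MeasureTheory ProbabilityTheory Real BigOperators

set_option maxHeartbeats 1000000 in
/-- polynomial risk bound in the parametric situation
(first part of Theorem 2.4). -/
theorem param_power_risk_bound
    (Θ : Set ℝ) (hΘcomp : IsCompact Θ) (hΘconv : Convex ℝ Θ)
    (ν : Measure ℝ) [SigmaFinite ν]
    (q : ℝ → ℝ) (hq : Measurable q) (hqnn : ∀ y, 0 ≤ q y)
    (B C B' C' : ℝ → ℝ)
    (hC : ∀ a ∈ Θ, HasDerivAt C (C' a) a)
    (hB : ∀ a ∈ Θ, HasDerivAt B (B' a) a)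
    (hCcont : ContinuousOn C' Θ) (hBcont : ContinuousOn B' Θ)
    (hCpos : ∀ a ∈ Θ, 0 < C' a)
    (hBeq : ∀ a ∈ Θ, B' a = a * C' a)
    (p : ℝ → ℝ → ℝ) (hp : ∀ y a, p y a = q y * Real.exp (y * C a - B a))
    (Pθ : ℝ → Measure ℝ)
    (hPθ : ∀ a ∈ Θ, Pθ a = ν.withDensity (fun y => ENNReal.ofReal (p y a)))
    (hPθprob : ∀ a ∈ Θ, IsProbabilityMeasure (Pθ a))
    (K : ℝ → ℝ → ℝ)
    (hK : ∀ a b, K a b = a * (C a - C b) - B a + B b)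
    {Ω : Type*} [MeasurableSpace Ω] (P : Measure Ω) [IsProbabilityMeasure P]
    (n : ℕ) (w : Fin n → ℝ) (hw : ∀ i, w i ∈ Set.Icc (0 : ℝ) 1)
    (N : ℝ) (hN : N = ∑ i, w i) (hNpos : 0 < N)
    (θstar : ℝ) (hθstar : θstar ∈ Θ)
    (Y : Fin n → Ω → ℝ) (hYmeas : ∀ i, Measurable (Y i))
    (hYindep : iIndepFun Y P)
    (hYlaw : ∀ i, Measure.map (Y i) P = Pθ θstar)
    (θt : Ω → ℝ) (hθt : ∀ ω, θt ω = (∑ i, w i * Y i ω) / N)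
    (hθtΘ : ∀ᵐ ω ∂P, θt ω ∈ Θ) :
    ∀ r : ℝ, 0 < r →
      ∫⁻ ω, ENNReal.ofReal ((N * K (θt ω) θstar) ^ r) ∂P
        ≤ ENNReal.ofReal (2 * r * Real.Gamma r) := by
  -- basic interval structure of Θ
  have hord : Θ.OrdConnected := hΘconv.ordConnected
  have hsub : ∀ x ∈ Θ, ∀ y ∈ Θ, Set.Icc x y ⊆ Θ := fun x hx y hy => hord.out hx hy
  have contC : ContinuousOn C Θ := fun a ha => (hC a ha).continuousAt.continuousWithinAt
  have contB : ContinuousOn B Θ := fun a ha => (hB a ha).continuousAt.continuousWithinAt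
  -- slope lemma via Cauchy MVT
  have hslope : ∀ x y, x ∈ Θ → y ∈ Θ → x < y →
      ∃ ξ, x < ξ ∧ ξ < y ∧ B y - B x = ξ * (C y - C x) := by
    intro x y hx hy hxy
    have hIcc : Set.Icc x y ⊆ Θ := hsub x hx y hy
    have hIoo : Set.Ioo x y ⊆ Θ := fun z hz => hIcc (Set.Ioo_subset_Icc_self hz)
    obtain ⟨ξ, hξ, heq⟩ := exists_ratio_hasDerivAt_eq_ratio_slope C C' hxy
      (contC.mono hIcc) (fun z hz => hC z (hIoo hz)) B B'
      (contB.mono hIcc) (fun z hz => hB z (hIoo hz))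
    refine ⟨ξ, hξ.1, hξ.2, ?_⟩
    have hξΘ : ξ ∈ Θ := hIoo hξ
    have h1 : (B y - B x) * C' ξ = (C y - C x) * (ξ * C' ξ) := by
      rw [← hBeq ξ hξΘ]; exact heq
    have h2 : C' ξ ≠ 0 := (hCpos ξ hξΘ).ne'
    field_simp at h1
    nlinarith [h1, (hCpos ξ hξΘ)]
  -- strict monotonicity of C on Θ
  have hCmono : ∀ x y, x ∈ Θ → y ∈ Θ → x < y → C x < C y := by
    intro x y hx hy hxy
    have hIcc : Set.Icc x y ⊆ Θ := hsub x hx y hy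
    have hIoo : Set.Ioo x y ⊆ Θ := fun z hz => hIcc (Set.Ioo_subset_Icc_self hz)
    obtain ⟨ξ, hξ, heq⟩ := exists_hasDerivAt_eq_slope C C' hxy
      (contC.mono hIcc) (fun z hz => hC z (hIoo hz))
    rw [eq_div_iff (sub_ne_zero.mpr hxy.ne')] at heq
    nlinarith [hCpos ξ (hIoo hξ), heq]
  have hCle : ∀ x y, x ∈ Θ → y ∈ Θ → x ≤ y → C x ≤ C y := by
    intro x y hx hy hxy
    rcases eq_or_lt_of_le hxy with h | h
    · rw [h]
    · exact (hCmono x y hx hy h).le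
  -- nonnegativity of K
  have hKnn : ∀ a ∈ Θ, 0 ≤ K a θstar := by
    intro a ha
    rw [hK]
    rcases lt_trichotomy a θstar with h | h | h
    · obtain ⟨ξ, hξ1, hξ2, hξeq⟩ := hslope a θstar ha hθstar h
      have hc : C a ≤ C θstar := (hCmono a θstar ha hθstar h).le
      nlinarith
    · rw [h]; ring_nf; simp
    · obtain ⟨ξ, hξ1, hξ2, hξeq⟩ := hslope θstar a hθstar ha h
      have hc : C θstar ≤ C a := (hCmono θstar a hθstar ha h).le
      nlinarith
  -- convexity of B along C
  have hconv : ∀ u ∈ Θ, ∀ v ∈ Θ, v ∈ Set.uIcc θstar u → ∀ s : ℝ, 0 ≤ s → s ≤ 1 →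
      C v = (1 - s) * C θstar + s * C u → B v - B θstar ≤ s * (B u - B θstar) := by
    intro u hu v hv hvmem s hs0 hs1 hCv
    rcases lt_trichotomy θstar u with hlt | heq | hgt
    · rw [Set.uIcc_of_le hlt.le] at hvmem
      have hD : 0 < C u - C θstar := sub_pos.mpr (hCmono θstar u hθstar hu hlt)
      rcases eq_or_lt_of_le hvmem.1 with h1 | h1
      · -- v = θstar, so s = 0
      -- C v = C θstar
        have : s * (C u - C θstar) = 0 := by rw [← h1] at hCv; nlinarith [hCv]
        have hs : s = 0 := by
          rcases mul_eq_zero.mp this with h | h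
          · exact h
          · exact absurd h hD.ne'
        rw [← h1, hs]; simp
      rcases eq_or_lt_of_le hvmem.2 with h2 | h2
      · -- v = u, so s = 1
        have : (1 - s) * (C u - C θstar) = 0 := by rw [h2] at hCv; nlinarith [hCv]
        have hs : s = 1 := by
          rcases mul_eq_zero.mp this with h | h
          · linarith
          · exact absurd h hD.ne'
        rw [h2, hs]; linarith
      · obtain ⟨ξ₁, hξ₁a, hξ₁b, hξ₁eq⟩ := hslope θstar v hθstar hv h1
        obtain ⟨ξ₂, hξ₂a, hξ₂b, hξ₂eq⟩ := hslope v u hv hu h2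
        have e1 : C v - C θstar = s * (C u - C θstar) := by nlinarith [hCv]
        have e2 : C u - C v = (1 - s) * (C u - C θstar) := by nlinarith [hCv]
        have hBu : B u - B θstar = ξ₂ * ((1-s) * (C u - C θstar)) + ξ₁ * (s * (C u - C θstar)) := by
          rw [← e1, ← e2]; linarith [hξ₁eq, hξ₂eq]
        have hle : ξ₁ ≤ ξ₂ := by linarith
        rw [hξ₁eq, e1, hBu]
        nlinarith [mul_nonneg (mul_nonneg hs0 (sub_nonneg.mpr hs1)) (mul_nonneg (sub_nonneg.mpr hle) hD.le)]
    · -- θstar = u : v = θstar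
      rw [heq] at hvmem ⊢
      rw [Set.uIcc_self] at hvmem
      rw [Set.mem_singleton_iff.mp hvmem]
      simp
    · rw [Set.uIcc_of_ge hgt.le] at hvmem
      have hD : 0 < C θstar - C u := sub_pos.mpr (hCmono u θstar hu hθstar hgt)
      rcases eq_or_lt_of_le hvmem.1 with h1 | h1
      · -- v = u : s = 1
        have : (1 - s) * (C θstar - C u) = 0 := by rw [← h1] at hCv; nlinarith [hCv]
        have hs : s = 1 := by
          rcases mul_eq_zero.mp this with h | h
          · linarith
          · exact absurd h hD.ne'
        rw [← h1, hs]; linarith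
      rcases eq_or_lt_of_le hvmem.2 with h2 | h2
      · -- v = θstar : s = 0
        have : s * (C θstar - C u) = 0 := by rw [h2] at hCv; nlinarith [hCv]
        have hs : s = 0 := by
          rcases mul_eq_zero.mp this with h | h
          · exact h
          · exact absurd h hD.ne'
        rw [h2, hs]; simp
      · obtain ⟨ξ₁, hξ₁a, hξ₁b, hξ₁eq⟩ := hslope u v hu hv h1
        obtain ⟨ξ₂, hξ₂a, hξ₂b, hξ₂eq⟩ := hslope v θstar hv hθstar h2
        have e1 : C θstar - C v = s * (C θstar - C u) := by nlinarith [hCv]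
        have e2 : C v - C u = (1 - s) * (C θstar - C u) := by nlinarith [hCv]
        have hBv : B v - B θstar = -(ξ₂ * (s * (C θstar - C u))) := by
          rw [← e1]; linarith [hξ₂eq]
        have hBu : B u - B θstar = -(ξ₁ * ((1-s) * (C θstar - C u))) - ξ₂ * (s * (C θstar - C u)) := by
          rw [← e1, ← e2]; linarith [hξ₁eq, hξ₂eq]
        have hle : ξ₁ ≤ ξ₂ := by linarith
        rw [hBv, hBu]
        nlinarith [mul_nonneg (mul_nonneg hs0 (sub_nonneg.mpr hs1)) (mul_nonneg (sub_nonneg.mpr hle) hD.le)]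
  -- measurability of densities
  have hpmeas : ∀ b : ℝ, Measurable fun y => ENNReal.ofReal (p y b) := by
    intro b
    have : (fun y => ENNReal.ofReal (p y b)) =
        fun y => ENNReal.ofReal (q y * Real.exp (y * C b - B b)) := by
      funext y; rw [hp]
    rw [this]
    exact (hq.mul (((measurable_id.mul_const (C b)).sub measurable_const).exp)).ennreal_ofReal
  have hpnn : ∀ y b, 0 ≤ p y b := by
    intro y b; rw [hp]; exact mul_nonneg (hqnn y) (exp_pos _).le
  -- total mass one
  have hmass : ∀ a ∈ Θ, ∫⁻ y, ENNReal.ofReal (p y a) ∂ν = 1 := by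
    intro a ha
    have h1 : (Pθ a) Set.univ = 1 := (hPθprob a ha).measure_univ
    rw [hPθ a ha, withDensity_apply _ MeasurableSet.univ, Measure.restrict_univ] at h1
    exact h1
  -- mgf of a single Y i
  have hmgf : ∀ a ∈ Θ, ∀ i : Fin n,
      Integrable (fun ω => Real.exp ((C a - C θstar) * Y i ω)) P ∧
      mgf (Y i) P (C a - C θstar) = Real.exp (B a - B θstar) := by
    intro a ha i
    set t : ℝ := C a - C θstar with htdef
    have hexp_meas : Measurable fun y : ℝ => Real.exp (t * y) :=
      (measurable_id.const_mul t).exp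
    have hptw : ∀ y : ℝ, p y θstar * Real.exp (t * y) = Real.exp (B a - B θstar) * p y a := by
      intro y
      rw [hp, hp, mul_assoc, ← Real.exp_add, ← mul_assoc (Real.exp (B a - B θstar)),
        mul_comm (Real.exp (B a - B θstar)) (q y), mul_assoc, ← Real.exp_add]
      congr 1
      rw [htdef]; ring
    have key : ∫⁻ y, ENNReal.ofReal (Real.exp (t * y)) ∂(Pθ θstar)
        = ENNReal.ofReal (Real.exp (B a - B θstar)) := by
      rw [hPθ θstar hθstar,
        lintegral_withDensity_eq_lintegral_mul _ (hpmeas θstar) hexp_meas.ennreal_ofReal]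
      have : ∀ y : ℝ, ((fun y => ENNReal.ofReal (p y θstar)) * fun y => ENNReal.ofReal (Real.exp (t * y))) y
          = ENNReal.ofReal (Real.exp (B a - B θstar)) * ENNReal.ofReal (p y a) := by
        intro y
        simp only [Pi.mul_apply]
        rw [← ENNReal.ofReal_mul (hpnn y θstar), hptw y,
          ENNReal.ofReal_mul (exp_pos _).le]
      rw [lintegral_congr this, lintegral_const_mul _ (hpmeas a), hmass a ha, mul_one]
    haveI : IsProbabilityMeasure (Pθ θstar) := hPθprob θstar hθstar
    have hint0 : Integrable (fun y => Real.exp (t * y)) (Pθ θstar) := by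
      refine ⟨hexp_meas.aestronglyMeasurable, ?_⟩
      rw [hasFiniteIntegral_iff_ofReal (Filter.Eventually.of_forall fun y => (exp_pos _).le)]
      rw [key]; exact ENNReal.ofReal_lt_top
    have hint : Integrable (fun ω => Real.exp (t * Y i ω)) P := by
      have h := (integrable_map_measure (μ := P) (f := Y i) (g := fun y => Real.exp (t * y))
        hexp_meas.aestronglyMeasurable (hYmeas i).aemeasurable)
      rw [hYlaw i] at h
      exact h.mp hint0
    have hmgfeq : mgf (Y i) P t = Real.exp (B a - B θstar) := by
      have hcv := integral_map (μ := P) (φ := Y i) (f := fun y => Real.exp (t * y))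
        (hYmeas i).aemeasurable hexp_meas.aestronglyMeasurable
      rw [hYlaw i] at hcv
      rw [mgf, ← hcv,
        integral_eq_lintegral_of_nonneg_ae (Filter.Eventually.of_forall fun y => (exp_pos _).le)
          hexp_meas.aestronglyMeasurable,
        key, ENNReal.toReal_ofReal (exp_pos _).le]
    exact ⟨hint, hmgfeq⟩
  -- per-summand mgf bound
  have hkey : ∀ u ∈ Θ, ∀ i : Fin n,
      Integrable (fun ω => Real.exp ((C u - C θstar) * (w i * Y i ω))) P ∧
      mgf (fun ω => w i * Y i ω) P (C u - C θstar) ≤ Real.exp (w i * (B u - B θstar)) := by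
    intro u hu i
    obtain ⟨wi0, wi1⟩ := hw i
    have huIcc : Set.uIcc θstar u ⊆ Θ := hord.uIcc_subset hθstar hu
    have hcont : ContinuousOn C (Set.uIcc θstar u) := contC.mono huIcc
    have hmem : (1 - w i) * C θstar + w i * C u ∈ Set.uIcc (C θstar) (C u) := by
      rcases le_total (C θstar) (C u) with h | h
      · exact Set.mem_uIcc.mpr (Or.inl ⟨by nlinarith, by nlinarith⟩)
      · exact Set.mem_uIcc.mpr (Or.inr ⟨by nlinarith, by nlinarith⟩)
    obtain ⟨v, hvmem, hCv⟩ := intermediate_value_uIcc hcont hmem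
    have hvΘ : v ∈ Θ := huIcc hvmem
    have hts : (C u - C θstar) * w i = C v - C θstar := by rw [hCv]; ring
    have hBv : B v - B θstar ≤ w i * (B u - B θstar) :=
      hconv u hu v hvΘ hvmem (w i) wi0 wi1 hCv
    obtain ⟨hint, hmgfeq⟩ := hmgf v hvΘ i
    have hfun : (fun ω => Real.exp ((C u - C θstar) * (w i * Y i ω)))
        = fun ω => Real.exp ((C v - C θstar) * Y i ω) := by
      funext ω; rw [← hts]; ring_nf
    constructor
    · rw [hfun]; exact hint
    · have : mgf (fun ω => w i * Y i ω) P (C u - C θstar) = mgf (Y i) P (C v - C θstar) := by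
        rw [mgf, mgf, hfun]
      rw [this, hmgfeq]
      exact Real.exp_le_exp.mpr hBv
  -- Chernoff bounds
  have hcherR : ∀ u ∈ Θ, θstar ≤ u →
      P {ω | N * u ≤ ∑ i, w i * Y i ω} ≤ ENNReal.ofReal (Real.exp (-(N * K u θstar))) := by
    intro u hu huθ
    have ht : 0 ≤ C u - C θstar := sub_nonneg.mpr (hCle θstar u hθstar hu huθ)
    set t : ℝ := C u - C θstar with htdef
    set X : Fin n → Ω → ℝ := fun i => fun ω => w i * Y i ω with hXdef
    have hXmeas : ∀ i, Measurable (X i) := fun i => (hYmeas i).const_mul _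
    have hXindep : iIndepFun X P :=
      hYindep.comp (fun i x => w i * x) (fun i => measurable_id.const_mul _)
    have hsum_int : Integrable (fun ω => Real.exp (t * (∑ i, X i) ω)) P := by
      refine hXindep.integrable_exp_mul_sum hXmeas (fun i _ => ?_)
      exact (hkey u hu i).1
    have hcher := measure_ge_le_exp_mul_mgf (μ := P) (X := ∑ i, X i) (N * u) ht hsum_int
    have hmgfsum : mgf (∑ i, X i) P t = ∏ i, mgf (X i) P t := hXindep.mgf_sum hXmeas Finset.univ
    have hprod : ∏ i, mgf (X i) P t ≤ Real.exp (N * (B u - B θstar)) := by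
      calc ∏ i, mgf (X i) P t ≤ ∏ i, Real.exp (w i * (B u - B θstar)) :=
            Finset.prod_le_prod (fun i _ => mgf_nonneg) (fun i _ => (hkey u hu i).2)
        _ = Real.exp (∑ i, w i * (B u - B θstar)) := by rw [Real.exp_sum]
        _ = Real.exp (N * (B u - B θstar)) := by rw [← Finset.sum_mul, ← hN]
    have hset : {ω | N * u ≤ ∑ i, w i * Y i ω} = {ω | N * u ≤ (∑ i, X i) ω} := by
      ext ω; simp [hXdef, Finset.sum_apply]
    have htoReal : (P {ω | N * u ≤ (∑ i, X i) ω}).toReal ≤ Real.exp (-(N * K u θstar)) := by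
      refine hcher.trans ?_
      calc Real.exp (-t * (N * u)) * mgf (∑ i, X i) P t
          ≤ Real.exp (-t * (N * u)) * Real.exp (N * (B u - B θstar)) := by
            rw [hmgfsum]
            exact mul_le_mul_of_nonneg_left hprod (Real.exp_pos _).le
        _ = Real.exp (-(N * K u θstar)) := by
            rw [← Real.exp_add]
            congr 1
            rw [hK, htdef]; ring
    rw [hset]
    exact (ENNReal.le_ofReal_iff_toReal_le (measure_ne_top P _) (Real.exp_pos _).le).mpr htoReal
  have hcherL : ∀ u ∈ Θ, u ≤ θstar →
      P {ω | ∑ i, w i * Y i ω ≤ N * u} ≤ ENNReal.ofReal (Real.exp (-(N * K u θstar))) := by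
    intro u hu huθ
    have ht : C u - C θstar ≤ 0 := sub_nonpos.mpr (hCle u θstar hu hθstar huθ)
    set t : ℝ := C u - C θstar with htdef
    set X : Fin n → Ω → ℝ := fun i => fun ω => w i * Y i ω with hXdef
    have hXmeas : ∀ i, Measurable (X i) := fun i => (hYmeas i).const_mul _
    have hXindep : iIndepFun X P :=
      hYindep.comp (fun i x => w i * x) (fun i => measurable_id.const_mul _)
    have hsum_int : Integrable (fun ω => Real.exp (t * (∑ i, X i) ω)) P := by
      refine hXindep.integrable_exp_mul_sum hXmeas (fun i _ => ?_)
      exact (hkey u hu i).1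
    have hcher := measure_le_le_exp_mul_mgf (μ := P) (X := ∑ i, X i) (N * u) ht hsum_int
    have hmgfsum : mgf (∑ i, X i) P t = ∏ i, mgf (X i) P t := hXindep.mgf_sum hXmeas Finset.univ
    have hprod : ∏ i, mgf (X i) P t ≤ Real.exp (N * (B u - B θstar)) := by
      calc ∏ i, mgf (X i) P t ≤ ∏ i, Real.exp (w i * (B u - B θstar)) :=
            Finset.prod_le_prod (fun i _ => mgf_nonneg) (fun i _ => (hkey u hu i).2)
        _ = Real.exp (∑ i, w i * (B u - B θstar)) := by rw [Real.exp_sum]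
        _ = Real.exp (N * (B u - B θstar)) := by rw [← Finset.sum_mul, ← hN]
    have hset : {ω | ∑ i, w i * Y i ω ≤ N * u} = {ω | (∑ i, X i) ω ≤ N * u} := by
      ext ω; simp [hXdef, Finset.sum_apply]
    have htoReal : (P {ω | (∑ i, X i) ω ≤ N * u}).toReal ≤ Real.exp (-(N * K u θstar)) := by
      refine hcher.trans ?_
      calc Real.exp (-t * (N * u)) * mgf (∑ i, X i) P t
          ≤ Real.exp (-t * (N * u)) * Real.exp (N * (B u - B θstar)) := by
            rw [hmgfsum]
            exact mul_le_mul_of_nonneg_left hprod (Real.exp_pos _).le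
        _ = Real.exp (-(N * K u θstar)) := by
            rw [← Real.exp_add]
            congr 1
            rw [hK, htdef]; ring
    rw [hset]
    exact (ENNReal.le_ofReal_iff_toReal_le (measure_ne_top P _) (Real.exp_pos _).le).mpr htoReal
  -- endpoints of Θ
  have hne : Θ.Nonempty := ⟨θstar, hθstar⟩
  set m : ℝ := sInf Θ with hmdef
  set M : ℝ := sSup Θ with hMdef
  have hmΘ : m ∈ Θ := hΘcomp.sInf_mem hne
  have hMΘ : M ∈ Θ := hΘcomp.sSup_mem hne
  have hlow : ∀ a ∈ Θ, m ≤ a := fun a ha => csInf_le hΘcomp.bddBelow ha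
  have hhigh : ∀ a ∈ Θ, a ≤ M := fun a ha => le_csSup hΘcomp.bddAbove ha
  -- derivative of u ↦ K u θstar
  have hKd : ∀ z ∈ Θ, HasDerivAt (fun a => a * (C a - C θstar) - B a + B θstar)
      (C z - C θstar) z := by
    intro z hz
    have h1 : HasDerivAt (fun a => a * (C a - C θstar))
        (1 * (C z - C θstar) + z * C' z) z :=
      (hasDerivAt_id z).mul ((hC z hz).sub_const (C θstar))
    have h2 : HasDerivAt (fun a => a * (C a - C θstar) - B a + B θstar)
        (1 * (C z - C θstar) + z * C' z - B' z) z := (h1.sub (hB z hz)).add_const (B θstar)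
    convert h2 using 1
    rw [hBeq z hz]; ring
  have hKcont : ContinuousOn (fun a => a * (C a - C θstar) - B a + B θstar) Θ :=
    fun a ha => ((hKd a ha).continuousAt).continuousWithinAt
  -- monotonicity of K on the right of θstar
  have hKmonoR : ∀ x y, x ∈ Θ → y ∈ Θ → θstar ≤ x → x ≤ y → K x θstar ≤ K y θstar := by
    intro x y hx hy hθx hxy
    rcases eq_or_lt_of_le hxy with h | h
    · rw [h]
    · have hIcc : Set.Icc x y ⊆ Θ := hsub x hx y hy
      have hIoo : Set.Ioo x y ⊆ Θ := fun z hz => hIcc (Set.Ioo_subset_Icc_self hz)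
      obtain ⟨ξ, hξ, heq⟩ := exists_hasDerivAt_eq_slope
        (fun a => a * (C a - C θstar) - B a + B θstar) (fun z => C z - C θstar) h
        (hKcont.mono hIcc) (fun z hz => hKd z (hIoo hz))
      rw [eq_div_iff (sub_ne_zero.mpr h.ne')] at heq
      have hCξ : C θstar ≤ C ξ := hCle θstar ξ hθstar (hIoo hξ) (le_trans hθx hξ.1.le)
      beta_reduce at heq
      have h0 : 0 ≤ (C ξ - C θstar) * (y - x) :=
        mul_nonneg (sub_nonneg.mpr hCξ) (sub_nonneg.mpr h.le)
      rw [hK, hK]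
      linarith [heq, h0]
  have hKmonoL : ∀ x y, x ∈ Θ → y ∈ Θ → x ≤ y → y ≤ θstar → K y θstar ≤ K x θstar := by
    intro x y hx hy hxy hθy
    rcases eq_or_lt_of_le hxy with h | h
    · rw [h]
    · have hIcc : Set.Icc x y ⊆ Θ := hsub x hx y hy
      have hIoo : Set.Ioo x y ⊆ Θ := fun z hz => hIcc (Set.Ioo_subset_Icc_self hz)
      obtain ⟨ξ, hξ, heq⟩ := exists_hasDerivAt_eq_slope
        (fun a => a * (C a - C θstar) - B a + B θstar) (fun z => C z - C θstar) h
        (hKcont.mono hIcc) (fun z hz => hKd z (hIoo hz))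
      rw [eq_div_iff (sub_ne_zero.mpr h.ne')] at heq
      have hCξ : C ξ ≤ C θstar := hCle ξ θstar (hIoo hξ) hθstar (le_trans hξ.2.le hθy)
      beta_reduce at heq
      have h0 : (C ξ - C θstar) * (y - x) ≤ 0 :=
        mul_nonpos_of_nonpos_of_nonneg (sub_nonpos.mpr hCξ) (sub_nonneg.mpr h.le)
      rw [hK, hK]
      linarith [heq, h0]
  have hKfun : ∀ a : ℝ, K a θstar = a * (C a - C θstar) - B a + B θstar := fun a => hK a θstar
  have hKθθ : K θstar θstar = 0 := by rw [hK]; ring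
  -- tail bound
  have htail : ∀ x : ℝ, 0 < x →
      P {ω | x < N * K (θt ω) θstar} ≤ ENNReal.ofReal (2 * Real.exp (-x)) := by
    intro x hx
    have hSθ : ∀ ω, ∑ i, w i * Y i ω = N * θt ω := by
      intro ω; rw [hθt ω, mul_div_cancel₀ _ hNpos.ne']
    have hR : P {ω | θt ω ∈ Θ ∧ θstar ≤ θt ω ∧ x < N * K (θt ω) θstar}
        ≤ ENNReal.ofReal (Real.exp (-x)) := by
      rcases le_or_gt (N * K M θstar) x with hMx | hMx
      · have hempty : {ω | θt ω ∈ Θ ∧ θstar ≤ θt ω ∧ x < N * K (θt ω) θstar} ⊆ (∅ : Set Ω) := by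
          intro ω ⟨h1, h2, h3⟩
          have : K (θt ω) θstar ≤ K M θstar := hKmonoR (θt ω) M h1 hMΘ h2 (hhigh _ h1)
          have : N * K (θt ω) θstar ≤ N * K M θstar := by nlinarith
          exact absurd h3 (by linarith)
        calc P _ ≤ P ∅ := measure_mono hempty
          _ = 0 := measure_empty
          _ ≤ _ := zero_le
      · have hθM : θstar ≤ M := hhigh θstar hθstar
        have hIccΘ : Set.Icc θstar M ⊆ Θ := hsub θstar hθstar M hMΘ
        have hcontK : ContinuousOn (fun u => K u θstar) (Set.Icc θstar M) := by
          have : (fun u => K u θstar) = fun a => a * (C a - C θstar) - B a + B θstar := by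
            funext a; exact hKfun a
          rw [this]; exact hKcont.mono hIccΘ
        have hmemx : x / N ∈ Set.Icc ((fun u => K u θstar) θstar) ((fun u => K u θstar) M) := by
          simp only [hKθθ]
          constructor
          · exact (div_pos hx hNpos).le
          · rw [div_le_iff₀ hNpos]; rw [mul_comm]; exact hMx.le
        obtain ⟨u, humem, hKu⟩ := intermediate_value_Icc hθM hcontK hmemx
        have huΘ : u ∈ Θ := hIccΘ humem
        have hKu' : K u θstar = x / N := hKu
        have hNKu : N * K u θstar = x := by
          rw [hKu', mul_div_cancel₀ _ hNpos.ne']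
        refine le_trans (measure_mono ?_) (le_trans (hcherR u huΘ humem.1) (le_of_eq ?_))
        · intro ω ⟨h1, h2, h3⟩
          show N * u ≤ ∑ i, w i * Y i ω
          rw [hSθ ω]
          have huθt : u ≤ θt ω := by
            by_contra hcon
            push_neg at hcon
            have : K (θt ω) θstar ≤ K u θstar := hKmonoR (θt ω) u h1 huΘ h2 hcon.le
            have : N * K (θt ω) θstar ≤ N * K u θstar := by nlinarith
            rw [hNKu] at this
            linarith
          nlinarith
        · rw [hNKu]
    have hL : P {ω | θt ω ∈ Θ ∧ θt ω ≤ θstar ∧ x < N * K (θt ω) θstar}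
        ≤ ENNReal.ofReal (Real.exp (-x)) := by
      rcases le_or_gt (N * K m θstar) x with hmx | hmx
      · have hempty : {ω | θt ω ∈ Θ ∧ θt ω ≤ θstar ∧ x < N * K (θt ω) θstar} ⊆ (∅ : Set Ω) := by
          intro ω ⟨h1, h2, h3⟩
          have : K (θt ω) θstar ≤ K m θstar := hKmonoL m (θt ω) hmΘ h1 (hlow _ h1) h2
          have : N * K (θt ω) θstar ≤ N * K m θstar := by nlinarith
          exact absurd h3 (by linarith)
        calc P _ ≤ P ∅ := measure_mono hempty
          _ = 0 := measure_empty
          _ ≤ _ := zero_le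
      · have hmθ : m ≤ θstar := hlow θstar hθstar
        have hIccΘ : Set.Icc m θstar ⊆ Θ := hsub m hmΘ θstar hθstar
        have hcontK : ContinuousOn (fun u => K u θstar) (Set.Icc m θstar) := by
          have : (fun u => K u θstar) = fun a => a * (C a - C θstar) - B a + B θstar := by
            funext a; exact hKfun a
          rw [this]; exact hKcont.mono hIccΘ
        have hmemx : x / N ∈ Set.Icc ((fun u => K u θstar) θstar) ((fun u => K u θstar) m) := by
          simp only [hKθθ]
          constructor
          · exact (div_pos hx hNpos).le
          · rw [div_le_iff₀ hNpos]; rw [mul_comm]; exact hmx.le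
        obtain ⟨u, humem, hKu⟩ := intermediate_value_Icc' hmθ hcontK hmemx
        have huΘ : u ∈ Θ := hIccΘ humem
        have hKu' : K u θstar = x / N := hKu
        have hNKu : N * K u θstar = x := by
          rw [hKu', mul_div_cancel₀ _ hNpos.ne']
        refine le_trans (measure_mono ?_) (le_trans (hcherL u huΘ humem.2) (le_of_eq ?_))
        · intro ω ⟨h1, h2, h3⟩
          show ∑ i, w i * Y i ω ≤ N * u
          rw [hSθ ω]
          have huθt : θt ω ≤ u := by
            by_contra hcon
            push_neg at hcon
            have : K (θt ω) θstar ≤ K u θstar := hKmonoL u (θt ω) huΘ h1 hcon.le h2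
            have : N * K (θt ω) θstar ≤ N * K u θstar := by nlinarith
            rw [hNKu] at this
            linarith
          nlinarith
        · rw [hNKu]
    have hnull : P {ω | θt ω ∉ Θ} = 0 := by
      have := hθtΘ
      rwa [MeasureTheory.ae_iff] at this
    have hincl : {ω | x < N * K (θt ω) θstar} ⊆
        ({ω | θt ω ∈ Θ ∧ θstar ≤ θt ω ∧ x < N * K (θt ω) θstar}
          ∪ {ω | θt ω ∈ Θ ∧ θt ω ≤ θstar ∧ x < N * K (θt ω) θstar})
          ∪ {ω | θt ω ∉ Θ} := by
      intro ω hmem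
      by_cases hω : θt ω ∈ Θ
      · rcases le_total θstar (θt ω) with h | h
        · exact Or.inl (Or.inl ⟨hω, h, hmem⟩)
        · exact Or.inl (Or.inr ⟨hω, h, hmem⟩)
      · exact Or.inr hω
    calc P {ω | x < N * K (θt ω) θstar} ≤ P _ := measure_mono hincl
      _ ≤ P ({ω | θt ω ∈ Θ ∧ θstar ≤ θt ω ∧ x < N * K (θt ω) θstar}
          ∪ {ω | θt ω ∈ Θ ∧ θt ω ≤ θstar ∧ x < N * K (θt ω) θstar}) + P {ω | θt ω ∉ Θ} :=
            measure_union_le _ _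
      _ = P ({ω | θt ω ∈ Θ ∧ θstar ≤ θt ω ∧ x < N * K (θt ω) θstar}
          ∪ {ω | θt ω ∈ Θ ∧ θt ω ≤ θstar ∧ x < N * K (θt ω) θstar}) := by rw [hnull, add_zero]
      _ ≤ P {ω | θt ω ∈ Θ ∧ θstar ≤ θt ω ∧ x < N * K (θt ω) θstar}
          + P {ω | θt ω ∈ Θ ∧ θt ω ≤ θstar ∧ x < N * K (θt ω) θstar} := measure_union_le _ _
      _ ≤ ENNReal.ofReal (Real.exp (-x)) + ENNReal.ofReal (Real.exp (-x)) := add_le_add hR hL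
      _ = ENNReal.ofReal (2 * Real.exp (-x)) := by
          rw [← ENNReal.ofReal_add (Real.exp_pos _).le (Real.exp_pos _).le]
          congr 1; ring
  -- final: layer cake
  intro r hr
  have hθtmeas : Measurable θt := by
    have : θt = fun ω => (∑ i, w i * Y i ω) / N := funext hθt
    rw [this]
    exact (Finset.measurable_sum _ fun i _ => (hYmeas i).const_mul _).div_const _
  -- continuous extensions via clamping
  have hmM : m ≤ M := hlow M hMΘ
  set clamp : ℝ → ℝ := fun a => max m (min a M) with hclampdef
  have hclampcont : Continuous clamp := continuous_const.max (continuous_id.min continuous_const)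
  have hclampmem : ∀ a, clamp a ∈ Θ := by
    intro a
    apply hsub m hmΘ M hMΘ
    constructor
    · exact le_max_left _ _
    · exact max_le hmM (min_le_right _ _)
  have hclampid : ∀ a ∈ Θ, clamp a = a := by
    intro a ha
    rw [hclampdef]
    simp only [min_eq_left (hhigh a ha), max_eq_right (hlow a ha)]
  set φ : ℝ → ℝ := fun a => N * (a * (C (clamp a) - C (clamp θstar)) - B (clamp a) + B (clamp θstar))
    with hφdef
  have hCclamp : Continuous fun a => C (clamp a) :=
    contC.comp_continuous hclampcont hclampmem
  have hBclamp : Continuous fun a => B (clamp a) :=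
    contB.comp_continuous hclampcont hclampmem
  have hφcont : Continuous φ := by
    apply continuous_const.mul
    exact ((continuous_id.mul (hCclamp.sub continuous_const)).sub hBclamp).add continuous_const
  have haeeq : (fun ω => N * K (θt ω) θstar) =ᵐ[P] fun ω => φ (θt ω) := by
    filter_upwards [hθtΘ] with ω hω
    rw [hK, hφdef]
    simp only [hclampid _ hω, hclampid _ hθstar]
  have haemeas : AEMeasurable (fun ω => N * K (θt ω) θstar) P :=
    ⟨fun ω => φ (θt ω), hφcont.measurable.comp hθtmeas, haeeq⟩
  have hnn : 0 ≤ᵐ[P] fun ω => N * K (θt ω) θstar := by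
    filter_upwards [hθtΘ] with ω hω
    exact mul_nonneg hNpos.le (hKnn _ hω)
  have hg_intble : ∀ t > (0:ℝ), IntervalIntegrable (fun s => r * s ^ (r - 1)) volume 0 t :=
    fun t _ => (intervalIntegral.intervalIntegrable_rpow' (by linarith)).const_mul r
  have hg_nn : ∀ᵐ t ∂(volume.restrict (Set.Ioi (0:ℝ))), 0 ≤ r * t ^ (r - 1) := by
    rw [ae_restrict_iff' measurableSet_Ioi]
    refine Filter.Eventually.of_forall fun t ht => ?_
    have : (0:ℝ) < t := ht
    positivity
  have hlayer := lintegral_comp_eq_lintegral_meas_lt_mul P hnn haemeas hg_intble hg_nn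
  have hLHSeq : ∫⁻ ω, ENNReal.ofReal ((N * K (θt ω) θstar) ^ r) ∂P
      = ∫⁻ ω, ENNReal.ofReal (∫ s in (0:ℝ)..(N * K (θt ω) θstar), r * s ^ (r - 1)) ∂P := by
    refine lintegral_congr_ae ?_
    filter_upwards [hnn] with ω hω
    congr 1
    rw [intervalIntegral.integral_const_mul,
      integral_rpow (Or.inl (by linarith : (-1:ℝ) < r - 1))]
    rw [sub_add_cancel, Real.zero_rpow hr.ne']
    field_simp
    simp
  rw [hLHSeq, hlayer]
  have hbound : ∫⁻ t in Set.Ioi (0:ℝ),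
      P {a | t < N * K (θt a) θstar} * ENNReal.ofReal (r * t ^ (r - 1))
      ≤ ∫⁻ t in Set.Ioi (0:ℝ), ENNReal.ofReal (2 * r * (Real.exp (-t) * t ^ (r - 1))) := by
    refine lintegral_mono_ae ?_
    rw [ae_restrict_iff' measurableSet_Ioi]
    refine Filter.Eventually.of_forall fun t ht => ?_
    have ht0 : (0:ℝ) < t := ht
    calc P {a | t < N * K (θt a) θstar} * ENNReal.ofReal (r * t ^ (r - 1))
        ≤ ENNReal.ofReal (2 * Real.exp (-t)) * ENNReal.ofReal (r * t ^ (r - 1)) :=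
          mul_le_mul_left (htail t ht0) _
      _ = ENNReal.ofReal (2 * r * (Real.exp (-t) * t ^ (r - 1))) := by
          rw [← ENNReal.ofReal_mul (by positivity)]
          congr 1; ring
  refine hbound.trans ?_
  have hint : IntegrableOn (fun t : ℝ => 2 * r * (Real.exp (-t) * t ^ (r - 1)))
      (Set.Ioi (0:ℝ)) volume := (Real.GammaIntegral_convergent hr).const_mul (2 * r)
  rw [← MeasureTheory.ofReal_integral_eq_lintegral_ofReal hint]
  · rw [MeasureTheory.integral_const_mul, ← Real.Gamma_eq_integral hr]
  · rw [Filter.EventuallyLE, ae_restrict_iff' measurableSet_Ioi]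
    refine Filter.Eventually.of_forall fun t ht => ?_
    have ht0 : (0:ℝ) < t := ht
    simp only [Pi.zero_apply]
    positivity
end

section
/- Let w_1,…,w_n ∈ [0,1], let f(X_1),…,f(X_n) ∈ Θ and θ ∈ Θ, and suppose Δ(W,θ) := Σ_{i=1}^n δ(θ, f(X_i))·1(w_i > 0) ≤ Δ for some Δ ≥ 0. Let Y_1,…,Y_n be independent with Y_i ~ P_{f(X_i)} (expectation E_{f(·)}), and let E_θ denote expectation when Y_1,…,Y_n are i.i.d. with law P_θ. Then for every nonnegative random variable ξ that is measurable with respect to the σ-field F_W generated by {Y_i : w_i > 0}, E_{f(·)}[ξ] ≤ (e^Δ · E_θ[ξ²])^{1/2}. -/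
open MeasureTheory ProbabilityTheory Real BigOperators
open scoped ENNReal

lemma lintegral_finset_prod_of_iIndepFun' {Ω ι : Type*} [MeasurableSpace Ω] {μ : Measure Ω}
    [IsProbabilityMeasure μ] (Y : ι → Ω → ℝ) (hY : ∀ i, Measurable (Y i))
    (hind : iIndepFun Y μ)
    (ρ : ι → ℝ → ℝ≥0∞) (hρ : ∀ i, Measurable (ρ i)) (s : Finset ι) :
    ∫⁻ ω, ∏ i ∈ s, ρ i (Y i ω) ∂μ = ∏ i ∈ s, ∫⁻ ω, ρ i (Y i ω) ∂μ := by
  classical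
  induction s using Finset.induction with
  | empty => simp
  | @insert i s hi ih =>
    have hfg : IndepFun (fun ω => ρ i (Y i ω)) (fun ω => ∏ j ∈ s, ρ j (Y j ω)) μ := by
      have h := hind.indepFun_finset {i} s (by simpa using hi) hY
      have h2 := h.comp
        (φ := fun v : (({i} : Finset ι) : Type _) → ℝ => ρ i (v ⟨i, Finset.mem_singleton_self i⟩))
        (ψ := fun v : ((s : Finset ι) : Type _) → ℝ => ∏ j : (s : Finset ι), ρ j.1 (v j))
        ((hρ i).comp (measurable_pi_apply _))
        (Finset.measurable_prod Finset.univ fun j _ => (hρ j.1).comp (measurable_pi_apply j))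
      have heq : (fun ω => ∏ j ∈ s, ρ j (Y j ω))
          = (fun v : ((s : Finset ι) : Type _) → ℝ => ∏ j : (s : Finset ι), ρ j.1 (v j))
            ∘ (fun a (j : (s : Finset ι)) => Y j a) := by
        funext a
        simp only [Function.comp]
        exact (Finset.prod_attach s (fun j => ρ j (Y j a))).symm
      rw [heq]
      exact h2
    rw [Finset.prod_insert hi, ← ih]
    have : (fun ω => ∏ j ∈ insert i s, ρ j (Y j ω))
        = (fun ω => ρ i (Y i ω)) * (fun ω => ∏ j ∈ s, ρ j (Y j ω)) := by
      funext ω; simp [Finset.prod_insert hi]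
    rw [show (∫⁻ ω, ∏ j ∈ insert i s, ρ j (Y j ω) ∂μ)
        = ∫⁻ ω, ((fun ω => ρ i (Y i ω)) * (fun ω => ∏ j ∈ s, ρ j (Y j ω))) ω ∂μ by rw [← this]]
    exact lintegral_mul_eq_lintegral_mul_lintegral_of_indepFun
      ((hρ i).comp (hY i))
      (Finset.measurable_prod s fun j _ => (hρ j).comp (hY j)) hfg

/-- the "small modeling bias" bound (Theorem 2.5): for a nonnegative
random variable ξ measurable w.r.t. the σ-field generated by the observations with
positive weights, the expectation under the nonparametric model is bounded via the
second moment under the parametric model. -/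
theorem small_modeling_bias_bound
    (Θ : Set ℝ) (hΘcomp : IsCompact Θ) (hΘconv : Convex ℝ Θ)
    (ν : Measure ℝ) [SigmaFinite ν]
    (q : ℝ → ℝ) (hq : Measurable q) (hqnn : ∀ y, 0 ≤ q y)
    (B C B' C' : ℝ → ℝ)
    (hC : ∀ a ∈ Θ, HasDerivAt C (C' a) a)
    (hB : ∀ a ∈ Θ, HasDerivAt B (B' a) a)
    (hCcont : ContinuousOn C' Θ) (hBcont : ContinuousOn B' Θ)
    (hCpos : ∀ a ∈ Θ, 0 < C' a)
    (hBeq : ∀ a ∈ Θ, B' a = a * C' a)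
    (p : ℝ → ℝ → ℝ) (hp : ∀ y a, p y a = q y * Real.exp (y * C a - B a))
    (Pθ : ℝ → Measure ℝ)
    (hPθ : ∀ a ∈ Θ, Pθ a = ν.withDensity (fun y => ENNReal.ofReal (p y a)))
    (hPθprob : ∀ a ∈ Θ, IsProbabilityMeasure (Pθ a))
    (K : ℝ → ℝ → ℝ)
    (hK : ∀ a b, K a b = a * (C a - C b) - B a + B b)
    (δ : ℝ → ℝ → ℝ)
    (hδ : ∀ a ∈ Θ, ∀ b ∈ Θ, ENNReal.ofReal (Real.exp (δ a b))
        = ∫⁻ y, ENNReal.ofReal ((p y b) ^ 2 / p y a) ∂ν)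
    (n : ℕ) (w : Fin n → ℝ) (hw : ∀ i, w i ∈ Set.Icc (0 : ℝ) 1)
    (fX : Fin n → ℝ) (hfX : ∀ i, fX i ∈ Θ)
    (θ : ℝ) (hθΘ : θ ∈ Θ)
    (Δ : ℝ) (hΔnn : 0 ≤ Δ)
    (hΔ : (∑ i, if 0 < w i then δ θ (fX i) else 0) ≤ Δ)
    {Ω : Type*} [MeasurableSpace Ω]
    (Pf Ppar : Measure Ω) [IsProbabilityMeasure Pf] [IsProbabilityMeasure Ppar]
    (Y : Fin n → Ω → ℝ) (hYmeas : ∀ i, Measurable (Y i))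
    (hYindepf : iIndepFun Y Pf)
    (hYlawf : ∀ i, Measure.map (Y i) Pf = Pθ (fX i))
    (hYindeppar : iIndepFun Y Ppar)
    (hYlawpar : ∀ i, Measure.map (Y i) Ppar = Pθ θ)
    (ξ : Ω → ℝ) (hξnn : ∀ ω, 0 ≤ ξ ω)
    (hξmeas : @Measurable Ω ℝ
      (⨆ i ∈ {i | 0 < w i}, MeasurableSpace.comap (Y i) inferInstance) _ ξ) :
    ∫⁻ ω, ENNReal.ofReal (ξ ω) ∂Pf
      ≤ (ENNReal.ofReal (Real.exp Δ) * ∫⁻ ω, ENNReal.ofReal ((ξ ω) ^ 2) ∂Ppar)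
          ^ (1 / 2 : ℝ) := by
  classical
  -- notation
  set S : Set (Fin n) := {i | 0 < w i} with hS
  have hm : (⨆ i ∈ S, MeasurableSpace.comap (Y i) inferInstance) ≤ ‹MeasurableSpace Ω› := by
    refine iSup₂_le fun i _ => ?_
    exact measurable_iff_comap_le.1 (hYmeas i)
  set Sf : Finset (Fin n) := Finset.univ.filter (fun i => 0 < w i) with hSf
  have hmemSf : ∀ i, i ∈ Sf ↔ 0 < w i := by
    intro i; simp [hSf]
  -- the likelihood ratio
  set r : Fin n → ℝ → ℝ :=
    fun i y => Real.exp (y * (C (fX i) - C θ) - (B (fX i) - B θ)) with hr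
  have hrnn : ∀ i y, 0 ≤ r i y := fun i y => (Real.exp_pos _).le
  set ρ : Fin n → ℝ → ℝ≥0∞ := fun i y => ENNReal.ofReal (r i y) with hρ
  have hρmeas : ∀ i, Measurable (ρ i) := by
    intro i
    exact ENNReal.measurable_ofReal.comp
      (Real.continuous_exp.comp
        ((continuous_id.mul continuous_const).sub continuous_const)).measurable
  have hpnn : ∀ a y, 0 ≤ p y a := by
    intro a y
    rw [hp]
    exact mul_nonneg (hqnn y) (Real.exp_pos _).le
  have hpmeas : ∀ a, Measurable fun y => ENNReal.ofReal (p y a) := by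
    intro a
    have : Measurable fun y => p y a := by
      simp only [hp]
      exact hq.mul (Real.continuous_exp.comp
        ((continuous_id.mul continuous_const).sub continuous_const)).measurable
    exact ENNReal.measurable_ofReal.comp this
  -- factorization of densities
  have hfactR : ∀ i y, p y (fX i) = p y θ * r i y := by
    intro i y
    rw [hp, hp, hr, mul_assoc, ← Real.exp_add]
    congr 1
    rw [Real.exp_eq_exp]
    ring
  have hfact : ∀ i y, ENNReal.ofReal (p y (fX i)) = ENNReal.ofReal (p y θ) * ρ i y := by
    intro i y
    rw [hfactR i y, ENNReal.ofReal_mul (hpnn θ y)]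
  -- key change of measure identity on ℝ
  have key : ∀ i, ∀ g : ℝ → ℝ≥0∞, Measurable g →
      ∫⁻ y, g y * ρ i y ∂(Pθ θ) = ∫⁻ y, g y ∂(Pθ (fX i)) := by
    intro i g hg
    rw [hPθ θ hθΘ, hPθ (fX i) (hfX i),
      lintegral_withDensity_eq_lintegral_mul _ (hpmeas θ) (g := fun y => g y * ρ i y) (hg.mul (hρmeas i)),
      lintegral_withDensity_eq_lintegral_mul _ (hpmeas (fX i)) hg]
    congr 1
    funext y
    simp only [Pi.mul_apply]
    rw [hfact i y]
    ring
  -- per-coordinate integrals against Pθ θ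
  have unitfactor : ∀ i, ∫⁻ y, ρ i y ∂(Pθ θ) = 1 := by
    intro i
    have h := key i (fun _ => 1) measurable_const
    simp only [one_mul] at h
    rw [h]
    haveI := hPθprob (fX i) (hfX i)
    simp
  have indfactor : ∀ i (u : Set ℝ), MeasurableSet u →
      ∫⁻ y, u.indicator (fun _ => (1 : ℝ≥0∞)) y * ρ i y ∂(Pθ θ) = Pθ (fX i) u := by
    intro i u hu
    rw [key i _ (measurable_const.indicator hu)]
    exact lintegral_indicator_one hu
  have sqfactor : ∀ i, ∫⁻ y, ρ i y * ρ i y ∂(Pθ θ)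
      = ENNReal.ofReal (Real.exp (δ θ (fX i))) := by
    intro i
    rw [key i (ρ i) (hρmeas i), hPθ (fX i) (hfX i),
      lintegral_withDensity_eq_lintegral_mul _ (hpmeas (fX i)) (hρmeas i),
      hδ θ hθΘ (fX i) (hfX i)]
    congr 1
    funext y
    simp only [Pi.mul_apply]
    rw [hρ]
    rw [← ENNReal.ofReal_mul (hpnn (fX i) y)]
    congr 1
    by_cases hz : p y θ = 0
    · have h0 : p y (fX i) = 0 := by rw [hfactR i y, hz, zero_mul]
      rw [h0, hz]
      simp
    · rw [hfactR i y]
      field_simp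
  -- the density Z
  set Z : Ω → ℝ≥0∞ := fun ω => ∏ i ∈ Sf, ρ i (Y i ω) with hZ
  have hZmeas : Measurable Z :=
    Finset.measurable_prod _ fun i _ => (hρmeas i).comp (hYmeas i)
  -- transfer lintegrals along laws
  have hmappar : ∀ i (h : ℝ → ℝ≥0∞), Measurable h →
      ∫⁻ ω, h (Y i ω) ∂Ppar = ∫⁻ y, h y ∂(Pθ θ) := by
    intro i h hh
    rw [← hYlawpar i, lintegral_map hh (hYmeas i)]
  -- the change of measure between Pf and Ppar on m
  have hZone : ∫⁻ ω, Z ω ∂Ppar = 1 := by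
    calc ∫⁻ ω, Z ω ∂Ppar
        = ∏ i ∈ Sf, ∫⁻ ω, ρ i (Y i ω) ∂Ppar :=
          lintegral_finset_prod_of_iIndepFun' Y hYmeas hYindeppar ρ hρmeas Sf
      _ = ∏ i ∈ Sf, (1 : ℝ≥0∞) := by
          refine Finset.prod_congr rfl fun i _ => ?_
          rw [hmappar i (ρ i) (hρmeas i), unitfactor i]
      _ = 1 := by simp
  have htrim : Pf.trim hm = (Ppar.withDensity Z).trim hm := by
    have hgen : (⨆ i ∈ S, MeasurableSpace.comap (Y i) inferInstance)
        = MeasurableSpace.generateFrom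
          (piiUnionInter
            (fun i => {s : Set Ω | MeasurableSet[MeasurableSpace.comap (Y i) inferInstance] s})
            S) :=
      (generateFrom_piiUnionInter_measurableSet _ _).symm
    have hpiS : IsPiSystem (piiUnionInter
        (fun i => {s : Set Ω | MeasurableSet[MeasurableSpace.comap (Y i) inferInstance] s}) S) :=
      isPiSystem_piiUnionInter _
        (fun i => @MeasurableSpace.isPiSystem_measurableSet Ω
          (MeasurableSpace.comap (Y i) inferInstance)) S
    haveI hfin : IsFiniteMeasure (Pf.trim hm) := isFiniteMeasure_trim hm
    refine @ext_of_generate_finite Ω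
      (⨆ i ∈ S, MeasurableSpace.comap (Y i) inferInstance)
      (Pf.trim hm) ((Ppar.withDensity Z).trim hm) _ hgen hpiS hfin ?_ ?_
    · -- agreement on the π-system
      rintro s ⟨t, htS, f, hfmem, rfl⟩
      have hsmeasm : MeasurableSet[⨆ i ∈ S, MeasurableSpace.comap (Y i) inferInstance]
          (⋂ x ∈ t, f x) := by
        rw [hgen]
        exact MeasurableSpace.measurableSet_generateFrom ⟨t, htS, f, hfmem, rfl⟩
      have hexU : ∀ x : Fin n, ∃ v : Set ℝ,
          MeasurableSet v ∧ Y x ⁻¹' v = (if x ∈ t then f x else Set.univ) := by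
        intro x
        by_cases hx : x ∈ t
        · obtain ⟨v, hv, hvf⟩ := MeasurableSpace.measurableSet_comap.mp (hfmem x hx)
          exact ⟨v, hv, by simp [hx, hvf]⟩
        · exact ⟨Set.univ, MeasurableSet.univ, by simp [hx]⟩
      choose u humeas hupre using hexU
      have hseq : ⋂ x ∈ t, f x = ⋂ x ∈ t, Y x ⁻¹' u x :=
        Set.iInter₂_congr fun x hx => by rw [hupre x, if_pos hx]
      rw [trim_measurableSet_eq hm hsmeasm, trim_measurableSet_eq hm hsmeasm, hseq]
      have hmAmb : MeasurableSet (⋂ x ∈ t, Y x ⁻¹' u x) :=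
        MeasurableSet.iInter fun x => MeasurableSet.iInter fun _ => (hYmeas x) (humeas x)
      rw [hYindepf.measure_inter_preimage_eq_mul t (fun i _ => humeas i)]
      rw [withDensity_apply _ hmAmb, ← lintegral_indicator hmAmb]
      set g : Fin n → ℝ → ℝ≥0∞ :=
        fun i y => (if i ∈ t then u i else Set.univ).indicator (fun _ => (1 : ℝ≥0∞)) y * ρ i y
        with hg
      have hmeasU : ∀ i, MeasurableSet (if i ∈ t then u i else Set.univ) := by
        intro i
        by_cases hx : i ∈ t
        · simpa [hx] using humeas i
        · simp [hx]
      have hgmeas : ∀ i, Measurable (g i) :=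
        fun i => (measurable_const.indicator (hmeasU i)).mul (hρmeas i)
      have htSf : t ⊆ Sf := fun i hi => (hmemSf i).2 (htS (Finset.mem_coe.mpr hi))
      have hindZ : (⋂ x ∈ t, Y x ⁻¹' u x).indicator Z
          = fun ω => ∏ i ∈ Sf, g i (Y i ω) := by
        funext ω
        by_cases hω : ω ∈ ⋂ x ∈ t, Y x ⁻¹' u x
        · rw [Set.indicator_of_mem hω, hZ]
          refine Finset.prod_congr rfl fun i _ => ?_
          by_cases hit : i ∈ t
          · have hmem : Y i ω ∈ u i := Set.mem_iInter₂.mp hω i hit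
            simp [hg, hit, Set.indicator_of_mem hmem]
          · simp [hg, hit]
        · rw [Set.indicator_of_notMem hω]
          symm
          have : ∃ i, i ∈ t ∧ Y i ω ∉ u i := by
            by_contra hcon
            push_neg at hcon
            exact hω (Set.mem_iInter₂.mpr fun i hi => hcon i hi)
          obtain ⟨i, hit, hni⟩ := this
          apply Finset.prod_eq_zero (htSf hit)
          simp [hg, hit, Set.indicator_of_notMem hni]
      rw [hindZ, lintegral_finset_prod_of_iIndepFun' Y hYmeas hYindeppar g hgmeas Sf]
      have hfac : ∀ i ∈ Sf, ∫⁻ ω, g i (Y i ω) ∂Ppar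
          = if i ∈ t then Pθ (fX i) (u i) else 1 := by
        intro i _
        rw [hmappar i (g i) (hgmeas i)]
        by_cases hit : i ∈ t
        · rw [if_pos hit]
          have h := indfactor i (u i) (humeas i)
          simpa [hg, hit] using h
        · rw [if_neg hit]
          have h := unitfactor i
          simpa [hg, hit] using h
      rw [Finset.prod_congr rfl hfac]
      have hfilter : Sf.filter (fun i => i ∈ t) = t := by
        ext i
        simp only [Finset.mem_filter]
        exact ⟨fun h => h.2, fun h => ⟨htSf h, h⟩⟩
      rw [← Finset.prod_filter, hfilter]
      refine Finset.prod_congr rfl fun x hx => ?_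
      rw [← hYlawf x, Measure.map_apply (hYmeas x) (humeas x)]
    · -- agreement on univ
      rw [trim_measurableSet_eq hm MeasurableSet.univ,
        trim_measurableSet_eq hm MeasurableSet.univ]
      rw [withDensity_apply _ MeasurableSet.univ, Measure.restrict_univ]
      rw [hZone]
      exact measure_univ
  -- second moment of Z
  have hZsq : ∫⁻ ω, Z ω * Z ω ∂Ppar ≤ ENNReal.ofReal (Real.exp Δ) := by
    have h1 : ∀ ω, Z ω * Z ω = ∏ i ∈ Sf, (ρ i (Y i ω) * ρ i (Y i ω)) := by
      intro ω
      rw [hZ, ← Finset.prod_mul_distrib]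
    calc ∫⁻ ω, Z ω * Z ω ∂Ppar
        = ∫⁻ ω, ∏ i ∈ Sf, (ρ i (Y i ω) * ρ i (Y i ω)) ∂Ppar := by
          simp only [h1]
      _ = ∏ i ∈ Sf, ∫⁻ ω, ρ i (Y i ω) * ρ i (Y i ω) ∂Ppar :=
          lintegral_finset_prod_of_iIndepFun' Y hYmeas hYindeppar
            (fun i y => ρ i y * ρ i y) (fun i => (hρmeas i).mul (hρmeas i)) Sf
      _ = ∏ i ∈ Sf, ENNReal.ofReal (Real.exp (δ θ (fX i))) := by
          refine Finset.prod_congr rfl fun i _ => ?_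
          rw [hmappar i (fun y => ρ i y * ρ i y) ((hρmeas i).mul (hρmeas i)), sqfactor i]
      _ = ENNReal.ofReal (∏ i ∈ Sf, Real.exp (δ θ (fX i))) := by
          rw [ENNReal.ofReal_prod_of_nonneg (fun i _ => (Real.exp_pos _).le)]
      _ = ENNReal.ofReal (Real.exp (∑ i ∈ Sf, δ θ (fX i))) := by
          rw [Real.exp_sum]
      _ ≤ ENNReal.ofReal (Real.exp Δ) := by
          apply ENNReal.ofReal_le_ofReal
          apply Real.exp_le_exp.2
          rw [hSf, Finset.sum_filter]
          exact hΔ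
  -- putting everything together
  have hξm2 : Measurable[⨆ i ∈ S, MeasurableSpace.comap (Y i) inferInstance]
      fun ω => ENNReal.ofReal (ξ ω) := ENNReal.measurable_ofReal.comp hξmeas
  have hξamb : Measurable fun ω => ENNReal.ofReal (ξ ω) := hξm2.mono hm le_rfl
  have conj : Real.HolderConjugate 2 2 := ⟨by norm_num, by norm_num, by norm_num⟩
  have hsq1 : ∫⁻ ω, ENNReal.ofReal (ξ ω) ^ (2 : ℝ) ∂Ppar
      = ∫⁻ ω, ENNReal.ofReal ((ξ ω) ^ 2) ∂Ppar := by
    congr 1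
    funext ω
    rw [show (2 : ℝ) = ((2 : ℕ) : ℝ) by norm_num, ENNReal.rpow_natCast,
      ← ENNReal.ofReal_pow (hξnn ω)]
  have hsq2 : ∫⁻ ω, Z ω ^ (2 : ℝ) ∂Ppar = ∫⁻ ω, Z ω * Z ω ∂Ppar := by
    congr 1
    funext ω
    rw [show (2 : ℝ) = ((2 : ℕ) : ℝ) by norm_num, ENNReal.rpow_natCast, sq]
  calc ∫⁻ ω, ENNReal.ofReal (ξ ω) ∂Pf
      = ∫⁻ ω, ENNReal.ofReal (ξ ω) ∂(Pf.trim hm) := (lintegral_trim hm hξm2).symm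
    _ = ∫⁻ ω, ENNReal.ofReal (ξ ω) ∂((Ppar.withDensity Z).trim hm) := by rw [htrim]
    _ = ∫⁻ ω, ENNReal.ofReal (ξ ω) ∂(Ppar.withDensity Z) := lintegral_trim hm hξm2
    _ = ∫⁻ ω, (Z * fun ω => ENNReal.ofReal (ξ ω)) ω ∂Ppar :=
        lintegral_withDensity_eq_lintegral_mul _ hZmeas hξamb
    _ = ∫⁻ ω, ((fun ω => ENNReal.ofReal (ξ ω)) * Z) ω ∂Ppar :=
        lintegral_congr fun ω => mul_comm _ _
    _ ≤ (∫⁻ ω, ENNReal.ofReal (ξ ω) ^ (2 : ℝ) ∂Ppar) ^ (1 / 2 : ℝ)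
        * (∫⁻ ω, Z ω ^ (2 : ℝ) ∂Ppar) ^ (1 / 2 : ℝ) :=
        ENNReal.lintegral_mul_le_Lp_mul_Lq Ppar conj hξamb.aemeasurable hZmeas.aemeasurable
    _ ≤ (∫⁻ ω, ENNReal.ofReal ((ξ ω) ^ 2) ∂Ppar) ^ (1 / 2 : ℝ)
        * (ENNReal.ofReal (Real.exp Δ)) ^ (1 / 2 : ℝ) := by
        rw [hsq1]
        gcongr
        rw [hsq2]
        exact hZsq
    _ = (ENNReal.ofReal (Real.exp Δ) * ∫⁻ ω, ENNReal.ofReal ((ξ ω) ^ 2) ∂Ppar)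
          ^ (1 / 2 : ℝ) := by
        rw [ENNReal.mul_rpow_of_nonneg _ _ (by norm_num : (0:ℝ) ≤ 1/2), mul_comm]
end

section
/- For every r > 0, the function h(x) := (log(x + c_r))^r with c_r := e^{max(r−1,0)} is concave on (0,∞). -/
open MeasureTheory Real BigOperators

/-- for every r > 0, the function x ↦ (log(x + c_r))^r with
c_r = e^{max(r-1,0)} is concave on (0,∞). -/
theorem log_pow_concave (r : ℝ) (hr : 0 < r) :
    ConcaveOn ℝ (Set.Ioi (0 : ℝ))
      (fun x => (Real.log (x + Real.exp (max (r - 1) 0))) ^ r) := by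
  set c : ℝ := Real.exp (max (r - 1) 0) with hc
  have hc1 : (1 : ℝ) ≤ c := by
    rw [hc]
    calc (1:ℝ) = Real.exp 0 := (Real.exp_zero).symm
    _ ≤ Real.exp (max (r-1) 0) := Real.exp_le_exp.2 (le_max_right _ _)
  have hcpos : (0 : ℝ) < c := lt_of_lt_of_le one_pos hc1
  -- key facts at each point
  have key : ∀ x ∈ Set.Ioi (0:ℝ), 0 < x + c ∧ max (r-1) 0 < Real.log (x + c) := by
    intro x hx
    have hx0 : 0 < x := hx
    have hxc : 0 < x + c := by linarith
    constructor
    · exact hxc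
    · have : Real.log c < Real.log (x + c) := Real.log_lt_log hcpos (by linarith)
      rwa [hc, Real.log_exp] at this
  refine concaveOn_of_hasDerivWithinAt2_nonpos (f' := fun x =>
      r * (Real.log (x + c) ^ (r - 1) * (x + c)⁻¹))
    (f'' := fun x =>
      r * ((r - 1) * Real.log (x + c) ^ (r - 1 - 1) * (x + c)⁻¹ * (x + c)⁻¹ +
        Real.log (x + c) ^ (r - 1) * (-1 / (x + c) ^ 2)))
    (convex_Ioi 0) ?_ ?_ ?_ ?_
  · -- continuity
    apply ContinuousOn.rpow_const
    · apply ContinuousOn.log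
      · exact (continuous_id.add continuous_const).continuousOn
      · intro x hx; exact (key x hx).1.ne'
    · intro x hx; exact Or.inr hr.le
  · -- first derivative
    rw [interior_Ioi]
    intro x hx
    obtain ⟨hxc, hL⟩ := key x hx
    have hLpos : 0 < Real.log (x + c) := lt_of_le_of_lt (le_max_right _ _) hL
    have h1 : HasDerivAt (fun y : ℝ => y + c) 1 x := (hasDerivAt_id x).add_const c
    have h2 : HasDerivAt (fun y : ℝ => Real.log (y + c)) ((x + c)⁻¹) x := by
      have := (Real.hasDerivAt_log hxc.ne').comp x h1
      simpa [Function.comp_def] using this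
    have h3 : HasDerivAt (fun y : ℝ => Real.log (y + c) ^ r)
        (r * Real.log (x + c) ^ (r - 1) * (x + c)⁻¹) x := by
      have := (Real.hasDerivAt_rpow_const (x := Real.log (x + c)) (p := r)
        (Or.inl hLpos.ne')).comp x h2
      simpa [Function.comp_def, mul_comm, mul_assoc] using this
    have := h3.hasDerivWithinAt (s := Set.Ioi (0:ℝ))
    simpa [mul_assoc] using this
  · -- second derivative
    rw [interior_Ioi]
    intro x hx
    obtain ⟨hxc, hL⟩ := key x hx
    have hLpos : 0 < Real.log (x + c) := lt_of_le_of_lt (le_max_right _ _) hL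
    have h1 : HasDerivAt (fun y : ℝ => y + c) 1 x := (hasDerivAt_id x).add_const c
    have h2 : HasDerivAt (fun y : ℝ => Real.log (y + c)) ((x + c)⁻¹) x := by
      have := (Real.hasDerivAt_log hxc.ne').comp x h1
      simpa [Function.comp_def] using this
    have h3 : HasDerivAt (fun y : ℝ => Real.log (y + c) ^ (r - 1))
        ((r - 1) * Real.log (x + c) ^ (r - 1 - 1) * (x + c)⁻¹) x := by
      have := (Real.hasDerivAt_rpow_const (x := Real.log (x + c)) (p := r - 1)
        (Or.inl hLpos.ne')).comp x h2
      simpa [Function.comp_def, mul_comm, mul_assoc] using this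
    have h4 : HasDerivAt (fun y : ℝ => (y + c)⁻¹) (-1 / (x + c) ^ 2) x := by
      have := h1.inv hxc.ne'
      simpa [Pi.inv_def] using this
    have h5 := ((h3.mul h4).const_mul r)
    have := h5.hasDerivWithinAt (s := Set.Ioi (0:ℝ))
    exact this
  · -- nonpositivity
    rw [interior_Ioi]
    intro x hx
    obtain ⟨hxc, hL⟩ := key x hx
    set L := Real.log (x + c) with hLdef
    have hLpos : 0 < L := lt_of_le_of_lt (le_max_right _ _) hL
    have hLr : r - 1 < L := lt_of_le_of_lt (le_max_left _ _) hL
    have hpow : L ^ (r - 1) = L * L ^ (r - 1 - 1) := by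
      have h := Real.rpow_add hLpos 1 (r - 1 - 1)
      rw [Real.rpow_one] at h
      calc L ^ (r - 1) = L ^ (1 + (r - 1 - 1)) := by norm_num
      _ = L * L ^ (r - 1 - 1) := h
    have hppos : 0 < L ^ (r - 1 - 1) := Real.rpow_pos_of_pos hLpos _
    have hinv : 0 < (x + c)⁻¹ := inv_pos.2 hxc
    have hsq : (x + c)⁻¹ * (x + c)⁻¹ = ((x + c) ^ 2)⁻¹ := by
      rw [← mul_inv]; ring_nf
    have hmain : (r - 1) * L ^ (r - 1 - 1) * (x + c)⁻¹ * (x + c)⁻¹ +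
        L ^ (r - 1) * (-1 / (x + c) ^ 2) ≤ 0 := by
      have h1 : (r - 1) * L ^ (r - 1 - 1) ≤ L * L ^ (r - 1 - 1) :=
        mul_le_mul_of_nonneg_right hLr.le hppos.le
      have h2 : L ^ (r - 1) * (-1 / (x + c) ^ 2) = -(L * L ^ (r - 1 - 1) * ((x+c)^2)⁻¹) := by
        rw [hpow]; field_simp
      rw [h2, mul_assoc, mul_assoc, hsq, ← mul_assoc]
      have hsqpos : (0:ℝ) < ((x + c) ^ 2)⁻¹ := inv_pos.2 (by positivity)
      nlinarith [mul_le_mul_of_nonneg_right h1 hsqpos.le]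
    exact mul_nonpos_of_nonneg_of_nonpos hr.le hmain
end

section
/- Let ζ be a nonnegative random variable with E[e^ζ] < ∞. Then for every r > 0, E[ζ^r] ≤ (log(E[e^ζ] + c_r))^r, where c_r := e^{max(r−1,0)}. -/
open MeasureTheory Real BigOperators

private lemma cont_rpow (r : ℝ) (hr : 0 < r) : Continuous fun x : ℝ => x ^ r :=
  continuous_iff_continuousAt.2 fun x => Real.continuousAt_rpow_const x r (Or.inr hr.le)

private lemma rpow_le_exp_aux (r : ℝ) (hr : 0 < r) {x : ℝ} (hx : 0 ≤ x) :
    x ^ r ≤ Real.exp (r * Real.log r - r) * Real.exp x := by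
  rcases eq_or_lt_of_le hx with h | h
  · rw [← h, Real.zero_rpow hr.ne']
    positivity
  · have h1 : Real.log (x / r) ≤ x / r - 1 := Real.log_le_sub_one_of_pos (by positivity)
    rw [Real.log_div h.ne' hr.ne'] at h1
    have h2 : r * (Real.log x - Real.log r) ≤ r * (x / r - 1) :=
      mul_le_mul_of_nonneg_left h1 hr.le
    have h3 : r * (x / r - 1) = x - r := by field_simp
    rw [Real.rpow_def_of_pos h, ← Real.exp_add]
    apply Real.exp_le_exp.2
    nlinarith

private lemma concave_aux (r : ℝ) (hr : 0 < r) :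
    ConcaveOn ℝ (Set.Ici (1:ℝ))
      (fun x => Real.log (x + Real.exp (max (r - 1) 0)) ^ r) := by
  set c := Real.exp (max (r - 1) 0) with hc
  have hc1 : (1:ℝ) ≤ c := Real.one_le_exp (le_max_right _ _)
  apply concaveOn_of_hasDerivWithinAt2_nonpos (convex_Ici 1)
    (f' := fun x => 1 / (x + c) * r * Real.log (x + c) ^ (r - 1))
    (f'' := fun x => (-(1 / (x + c) ^ 2) * r) * Real.log (x + c) ^ (r - 1)
      + (1 / (x + c) * r) * (1 / (x + c) * (r - 1) * Real.log (x + c) ^ (r - 1 - 1)))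
  · -- continuity
    intro x hx
    have hxc : (0:ℝ) < x + c := by
      have := hx.out; linarith
    exact (ContinuousAt.rpow_const ((continuousAt_id.add continuousAt_const).log hxc.ne')
      (Or.inr hr.le)).continuousWithinAt
  all_goals
    rw [interior_Ici]
    intro x hx
    have hx1 : (1:ℝ) < x := hx
    have hxc : (0:ℝ) < x + c := by linarith
    have hL : 0 < Real.log (x + c) := Real.log_pos (by linarith)
    have hlog : HasDerivAt (fun y => Real.log (y + c)) (1 / (x + c)) x :=
      ((hasDerivAt_id x).add_const c).log hxc.ne'
  · -- first derivative
    exact (hlog.rpow_const (Or.inl hL.ne')).hasDerivWithinAt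
  · -- second derivative
    have hu : HasDerivAt (fun y => 1 / (y + c) * r) (-(1 / (x + c) ^ 2) * r) x := by
      have : HasDerivAt (fun y => 1 / (y + c)) (-(1 / (x + c) ^ 2)) x := by
        simpa [one_div, neg_div, Pi.inv_def] using ((hasDerivAt_id x).add_const c).inv hxc.ne'
      exact this.mul_const r
    have hv : HasDerivAt (fun y => Real.log (y + c) ^ (r - 1))
        (1 / (x + c) * (r - 1) * Real.log (x + c) ^ (r - 1 - 1)) x :=
      hlog.rpow_const (Or.inl hL.ne')
    exact (hu.mul hv).hasDerivWithinAt
  · -- nonpositivity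
    have hrw : r - 1 - 1 = r - 2 := by ring
    have hpow : Real.log (x + c) ^ (r - 1)
        = Real.log (x + c) ^ (r - 2) * Real.log (x + c) := by
      rw [← Real.rpow_add_one hL.ne', show r - 2 + 1 = r - 1 by ring]
    have hLc : r - 1 ≤ Real.log (x + c) := by
      have h1 : Real.log c ≤ Real.log (x + c) := Real.log_le_log (by linarith) (by linarith)
      rw [hc, Real.log_exp] at h1
      exact le_trans (le_max_left _ _) h1
    rw [hrw, hpow]
    have h2 : (0:ℝ) ≤ r * (1 / (x + c)) ^ 2 * Real.log (x + c) ^ (r - 2) := by positivity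
    have h3 : (r - 1) - Real.log (x + c) ≤ 0 := by linarith
    calc (-(1 / (x + c) ^ 2) * r) * (Real.log (x + c) ^ (r - 2) * Real.log (x + c))
          + (1 / (x + c) * r) * (1 / (x + c) * (r - 1) * Real.log (x + c) ^ (r - 2))
        = (r * (1 / (x + c)) ^ 2 * Real.log (x + c) ^ (r - 2))
            * ((r - 1) - Real.log (x + c)) := by
              have hne : x + c ≠ 0 := hxc.ne'
              field_simp
              ring
      _ ≤ 0 := mul_nonpos_of_nonneg_of_nonpos h2 h3

/-- for a nonnegative random variable ζ with E[e^ζ] < ∞,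
E[ζ^r] ≤ (log(E[e^ζ] + c_r))^r with c_r = e^{max(r-1,0)}. -/
theorem moment_bound_via_log_exp
    {Ω : Type*} [MeasurableSpace Ω] (P : Measure Ω) [IsProbabilityMeasure P]
    (ζ : Ω → ℝ) (hζnn : ∀ ω, 0 ≤ ζ ω) (hζmeas : Measurable ζ)
    (hint : Integrable (fun ω => Real.exp (ζ ω)) P)
    (r : ℝ) (hr : 0 < r) :
    ∫ ω, (ζ ω) ^ r ∂P
      ≤ (Real.log ((∫ ω, Real.exp (ζ ω) ∂P) + Real.exp (max (r - 1) 0))) ^ r := by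
  set c := Real.exp (max (r - 1) 0) with hc
  have hc1 : (1:ℝ) ≤ c := Real.one_le_exp (le_max_right _ _)
  set φ : ℝ → ℝ := fun x => Real.log (x + c) ^ r with hφ
  -- pointwise bound
  have hpt : ∀ ω, ζ ω ^ r ≤ φ (Real.exp (ζ ω)) := by
    intro ω
    apply Real.rpow_le_rpow (hζnn ω) _ hr.le
    have := Real.log_le_log (Real.exp_pos (ζ ω)) (by linarith [Real.exp_pos (ζ ω)] :
      Real.exp (ζ ω) ≤ Real.exp (ζ ω) + c)
    rwa [Real.log_exp] at this
  -- measurability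
  have hm1 : Measurable fun ω => ζ ω ^ r := (cont_rpow r hr).measurable.comp hζmeas
  have hm2 : Measurable fun ω => φ (Real.exp (ζ ω)) :=
    (cont_rpow r hr).measurable.comp
      (Real.measurable_log.comp ((Real.measurable_exp.comp hζmeas).add_const c))
  -- integrability of ζ^r
  have hint1 : Integrable (fun ω => ζ ω ^ r) P := by
    apply Integrable.mono' (hint.const_mul (Real.exp (r * Real.log r - r)))
      hm1.aestronglyMeasurable
    filter_upwards with ω
    rw [Real.norm_eq_abs, abs_of_nonneg (Real.rpow_nonneg (hζnn ω) r)]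
    exact rpow_le_exp_aux r hr (hζnn ω)
  -- integrability of φ ∘ exp ζ
  have hptφ : ∀ ω, φ (Real.exp (ζ ω))
      ≤ (Real.exp (r * Real.log r - r) * Real.exp (Real.log (1 + c))) * Real.exp (ζ ω) := by
    intro ω
    have he1 : (1:ℝ) ≤ Real.exp (ζ ω) := Real.one_le_exp (hζnn ω)
    have hlognn : 0 ≤ Real.log (Real.exp (ζ ω) + c) :=
      Real.log_nonneg (by linarith)
    have hbd : Real.log (Real.exp (ζ ω) + c) ≤ ζ ω + Real.log (1 + c) := by
      have h1 : Real.exp (ζ ω) + c ≤ Real.exp (ζ ω) * (1 + c) := by nlinarith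
      have h2 := Real.log_le_log (by linarith) h1
      rwa [Real.log_mul (by positivity) (by positivity), Real.log_exp] at h2
    calc φ (Real.exp (ζ ω)) ≤ (ζ ω + Real.log (1 + c)) ^ r :=
          Real.rpow_le_rpow hlognn hbd hr.le
      _ ≤ Real.exp (r * Real.log r - r) * Real.exp (ζ ω + Real.log (1 + c)) :=
          rpow_le_exp_aux r hr (by
            have := Real.log_nonneg (by linarith : (1:ℝ) ≤ 1 + c)
            linarith [hζnn ω])
      _ = (Real.exp (r * Real.log r - r) * Real.exp (Real.log (1 + c))) * Real.exp (ζ ω) := by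
          rw [Real.exp_add]; ring
  have hint2 : Integrable (fun ω => φ (Real.exp (ζ ω))) P := by
    apply Integrable.mono'
      (hint.const_mul (Real.exp (r * Real.log r - r) * Real.exp (Real.log (1 + c))))
      hm2.aestronglyMeasurable
    filter_upwards with ω
    rw [Real.norm_eq_abs, abs_of_nonneg (Real.rpow_nonneg (Real.log_nonneg (by
      linarith [Real.one_le_exp (hζnn ω)])) r)]
    exact hptφ ω
  -- Jensen
  have hconc : ConcaveOn ℝ (Set.Ici (1:ℝ)) φ := concave_aux r hr
  have hcont : ContinuousOn φ (Set.Ici (1:ℝ)) := by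
    intro x hx
    have hxc : (0:ℝ) < x + c := by have := hx.out; linarith
    exact (ContinuousAt.rpow_const ((continuousAt_id.add continuousAt_const).log hxc.ne')
      (Or.inr hr.le)).continuousWithinAt
  have hjensen := hconc.le_map_integral hcont isClosed_Ici
    (.of_forall fun ω => Real.one_le_exp (hζnn ω)) hint hint2
  calc ∫ ω, ζ ω ^ r ∂P ≤ ∫ ω, φ (Real.exp (ζ ω)) ∂P :=
        integral_mono hint1 hint2 hpt
    _ ≤ φ (∫ ω, Real.exp (ζ ω) ∂P) := hjensen
    _ = _ := rfl
end

section
/- For every θ_0, θ_1, θ_2 ∈ Θ, K(θ_1,θ_2)^{1/2} ≤ κ·(K(θ_1,θ_0)^{1/2} + K(θ_2,θ_0)^{1/2}); moreover, for every finite sequence θ_0, θ_1, …, θ_m ∈ Θ, K(θ_0,θ_m)^{1/2} ≤ κ·(K(θ_0,θ_1)^{1/2} + K(θ_1,θ_2)^{1/2} + … + K(θ_{m−1},θ_m)^{1/2}). -/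
open MeasureTheory Real BigOperators

open intervalIntegral in
private lemma integral_weight (a b c : ℝ) :
    (∫ u in a..b, (u - a) * c) = c * (b - a) ^ 2 / 2 := by
  rw [intervalIntegral.integral_mul_const,
    intervalIntegral.integral_sub intervalIntegrable_id intervalIntegrable_const,
    integral_id, _root_.intervalIntegral.integral_const]
  simp [smul_eq_mul]; ring

private lemma wint (a b c : ℝ) :
    IntervalIntegrable (fun u => (u - a) * c) volume a b :=
  (Continuous.mul (by continuity) continuous_const).intervalIntegrable a b

private lemma K_upper {I : ℝ → ℝ} {a b c : ℝ}
    (hint : IntervalIntegrable (fun u => (u - a) * I u) volume a b)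
    (hub : ∀ u ∈ Set.uIcc a b, I u ≤ c) :
    (∫ u in a..b, (u - a) * I u) ≤ c * (b - a) ^ 2 / 2 := by
  rcases le_total a b with hab | hba
  · rw [← integral_weight a b c]
    refine intervalIntegral.integral_mono_on hab hint (wint a b c) ?_
    intro x hx
    have hx' : x ∈ Set.uIcc a b := by rw [Set.uIcc_of_le hab]; exact hx
    have h1 : 0 ≤ x - a := by linarith [hx.1]
    exact mul_le_mul_of_nonneg_left (hub x hx') h1
  · rw [intervalIntegral.integral_symm b a]
    have h2 : (∫ u in b..a, (u - a) * c) ≤ ∫ u in b..a, (u - a) * I u := by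
      refine intervalIntegral.integral_mono_on hba (wint a b c).symm hint.symm ?_
      intro x hx
      have hx' : x ∈ Set.uIcc a b := by rw [Set.uIcc_of_ge hba]; exact hx
      have h1 : x - a ≤ 0 := by linarith [hx.2]
      exact mul_le_mul_of_nonpos_left (hub x hx') h1
    have h3 : (∫ u in b..a, (u - a) * c) = - (c * (b - a) ^ 2 / 2) := by
      rw [intervalIntegral.integral_symm a b, integral_weight]
    linarith
    
private lemma K_lower {I : ℝ → ℝ} {a b c : ℝ}
    (hint : IntervalIntegrable (fun u => (u - a) * I u) volume a b)
    (hlb : ∀ u ∈ Set.uIcc a b, c ≤ I u) :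
    c * (b - a) ^ 2 / 2 ≤ ∫ u in a..b, (u - a) * I u := by
  rcases le_total a b with hab | hba
  · rw [← integral_weight a b c]
    refine intervalIntegral.integral_mono_on hab (wint a b c) hint ?_
    intro x hx
    have hx' : x ∈ Set.uIcc a b := by rw [Set.uIcc_of_le hab]; exact hx
    have h1 : 0 ≤ x - a := by linarith [hx.1]
    exact mul_le_mul_of_nonneg_left (hlb x hx') h1
  · rw [intervalIntegral.integral_symm b a]
    have h2 : (∫ u in b..a, (u - a) * I u) ≤ ∫ u in b..a, (u - a) * c := by
      refine intervalIntegral.integral_mono_on hba hint.symm (wint a b c).symm ?_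
      intro x hx
      have hx' : x ∈ Set.uIcc a b := by rw [Set.uIcc_of_ge hba]; exact hx
      have h1 : x - a ≤ 0 := by linarith [hx.2]
      exact mul_le_mul_of_nonpos_left (hlb x hx') h1
    have h3 : (∫ u in b..a, (u - a) * c) = - (c * (b - a) ^ 2 / 2) := by
      rw [intervalIntegral.integral_symm a b, integral_weight]
    linarith

private lemma sqrt_le_of_le {x c d : ℝ} (hc : 0 ≤ c) (h : x ≤ c * d ^ 2 / 2) :
    Real.sqrt x ≤ Real.sqrt (c / 2) * |d| := by
  have h2 : Real.sqrt x ≤ Real.sqrt (c / 2 * d ^ 2) := by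
    apply Real.sqrt_le_sqrt; linarith
  rwa [Real.sqrt_mul (by positivity), Real.sqrt_sq_eq_abs] at h2

private lemma le_sqrt_of_le {x c d : ℝ} (hc : 0 ≤ c) (h : c * d ^ 2 / 2 ≤ x) :
    Real.sqrt (c / 2) * |d| ≤ Real.sqrt x := by
  have h2 : Real.sqrt (c / 2 * d ^ 2) ≤ Real.sqrt x := by
    apply Real.sqrt_le_sqrt; linarith
  rwa [Real.sqrt_mul (by positivity), Real.sqrt_sq_eq_abs] at h2

/-- "metric-like" property of the square root of the
Kullback–Leibler divergence (Lemma A.1). -/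
theorem sqrt_KL_metric_like
    (Θ : Set ℝ) (hΘconv : Convex ℝ Θ) (κ : ℝ) (hκ : 1 ≤ κ)
    (I : ℝ → ℝ) (hIcont : ContinuousOn I Θ) (hIpos : ∀ u ∈ Θ, 0 < I u)
    (hIκ : ∀ u ∈ Θ, ∀ v ∈ Θ, Real.sqrt (I u / I v) ≤ κ)
    (K : ℝ → ℝ → ℝ) (hK : ∀ a b, K a b = ∫ u in a..b, (u - a) * I u) :
    (∀ θ₀ ∈ Θ, ∀ θ₁ ∈ Θ, ∀ θ₂ ∈ Θ,
      Real.sqrt (K θ₁ θ₂) ≤ κ * (Real.sqrt (K θ₁ θ₀) + Real.sqrt (K θ₂ θ₀))) ∧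
    (∀ (m : ℕ) (θs : ℕ → ℝ), (∀ j ≤ m, θs j ∈ Θ) →
      Real.sqrt (K (θs 0) (θs m))
        ≤ κ * ∑ j ∈ Finset.range m, Real.sqrt (K (θs j) (θs (j + 1)))) := by
  have hOC : Θ.OrdConnected := hΘconv.ordConnected
  have hsub : ∀ a ∈ Θ, ∀ b ∈ Θ, Set.uIcc a b ⊆ Θ := fun a ha b hb =>
    Set.OrdConnected.uIcc_subset hOC ha hb
  have hint : ∀ a ∈ Θ, ∀ b ∈ Θ,
      IntervalIntegrable (fun u => (u - a) * I u) volume a b := by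
    intro a ha b hb
    exact ContinuousOn.intervalIntegrable
      (((continuousOn_id.sub continuousOn_const)).mul (hIcont.mono (hsub a ha b hb)))
  -- lower bound for each segment, with comparison point U anywhere in Θ
  have seg_lower : ∀ U ∈ Θ, ∀ a ∈ Θ, ∀ b ∈ Θ,
      Real.sqrt (I U / 2) * |b - a| ≤ κ * Real.sqrt (K a b) := by
    intro U hU a ha b hb
    obtain ⟨v, hv, hvmin⟩ := isCompact_uIcc.exists_isMinOn ⟨a, Set.left_mem_uIcc⟩
      (hIcont.mono (hsub a ha b hb))
    have hvΘ : v ∈ Θ := hsub a ha b hb hv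
    have hIvpos : 0 < I v := hIpos v hvΘ
    have h1 : I v * (b - a) ^ 2 / 2 ≤ K a b := by
      rw [hK]; exact K_lower (hint a ha b hb) (fun u hu => hvmin hu)
    have h2 : Real.sqrt (I v / 2) * |b - a| ≤ Real.sqrt (K a b) :=
      le_sqrt_of_le hIvpos.le h1
    have h3 : Real.sqrt (I U) ≤ κ * Real.sqrt (I v) := by
      have h4 := hIκ U hU v hvΘ
      rw [Real.sqrt_div (hIpos U hU).le] at h4
      have h5 : 0 < Real.sqrt (I v) := Real.sqrt_pos.mpr hIvpos
      calc Real.sqrt (I U) = Real.sqrt (I U) / Real.sqrt (I v) * Real.sqrt (I v) := by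
            field_simp
        _ ≤ κ * Real.sqrt (I v) := by
            exact mul_le_mul_of_nonneg_right h4 h5.le
    have h6 : Real.sqrt (I U / 2) ≤ κ * Real.sqrt (I v / 2) := by
      rw [Real.sqrt_div (hIpos U hU).le, Real.sqrt_div hIvpos.le]
      have hs2 : (0:ℝ) < Real.sqrt 2 := by positivity
      rw [← mul_div_assoc]
      gcongr
    calc Real.sqrt (I U / 2) * |b - a| ≤ κ * Real.sqrt (I v / 2) * |b - a| :=
          mul_le_mul_of_nonneg_right h6 (abs_nonneg _)
      _ = κ * (Real.sqrt (I v / 2) * |b - a|) := by ring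
      _ ≤ κ * Real.sqrt (K a b) :=
          mul_le_mul_of_nonneg_left h2 (by linarith)
  -- upper bound for a segment, with U the maximizer on that segment
  have seg_upper : ∀ a ∈ Θ, ∀ b ∈ Θ, ∃ U ∈ Θ,
      Real.sqrt (K a b) ≤ Real.sqrt (I U / 2) * |b - a| := by
    intro a ha b hb
    obtain ⟨U, hU, hUmax⟩ := isCompact_uIcc.exists_isMaxOn ⟨a, Set.left_mem_uIcc⟩
      (hIcont.mono (hsub a ha b hb))
    have hUΘ : U ∈ Θ := hsub a ha b hb hU
    refine ⟨U, hUΘ, ?_⟩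
    have h1 : K a b ≤ I U * (b - a) ^ 2 / 2 := by
      rw [hK]; exact K_upper (hint a ha b hb) (fun u hu => hUmax hu)
    exact sqrt_le_of_le (hIpos U hUΘ).le h1
  constructor
  · intro θ₀ h₀ θ₁ h₁ θ₂ h₂
    obtain ⟨U, hUΘ, hup⟩ := seg_upper θ₁ h₁ θ₂ h₂
    have t1 := seg_lower U hUΘ θ₁ h₁ θ₀ h₀
    have t2 := seg_lower U hUΘ θ₂ h₂ θ₀ h₀
    have habs : |θ₂ - θ₁| ≤ |θ₀ - θ₁| + |θ₀ - θ₂| := by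
      have := abs_sub_le θ₂ θ₀ θ₁
      have h := abs_sub_comm θ₂ θ₀
      linarith
    have hs : (0:ℝ) ≤ Real.sqrt (I U / 2) := Real.sqrt_nonneg _
    calc Real.sqrt (K θ₁ θ₂) ≤ Real.sqrt (I U / 2) * |θ₂ - θ₁| := hup
      _ ≤ Real.sqrt (I U / 2) * (|θ₀ - θ₁| + |θ₀ - θ₂|) :=
          mul_le_mul_of_nonneg_left habs hs
      _ = Real.sqrt (I U / 2) * |θ₀ - θ₁| + Real.sqrt (I U / 2) * |θ₀ - θ₂| := by ring
      _ ≤ κ * Real.sqrt (K θ₁ θ₀) + κ * Real.sqrt (K θ₂ θ₀) := add_le_add t1 t2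
      _ = κ * (Real.sqrt (K θ₁ θ₀) + Real.sqrt (K θ₂ θ₀)) := by ring
  · intro m θs hθs
    obtain ⟨U, hUΘ, hup⟩ := seg_upper (θs 0) (hθs 0 (Nat.zero_le m)) (θs m) (hθs m le_rfl)
    have hs : (0:ℝ) ≤ Real.sqrt (I U / 2) := Real.sqrt_nonneg _
    have htel : |θs m - θs 0| ≤ ∑ j ∈ Finset.range m, |θs (j + 1) - θs j| := by
      have h1 : θs m - θs 0 = ∑ j ∈ Finset.range m, (θs (j + 1) - θs j) :=
        (Finset.sum_range_sub θs m).symm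
      rw [h1]
      exact Finset.abs_sum_le_sum_abs _ _
    calc Real.sqrt (K (θs 0) (θs m)) ≤ Real.sqrt (I U / 2) * |θs m - θs 0| := hup
      _ ≤ Real.sqrt (I U / 2) * ∑ j ∈ Finset.range m, |θs (j + 1) - θs j| :=
          mul_le_mul_of_nonneg_left htel hs
      _ = ∑ j ∈ Finset.range m, Real.sqrt (I U / 2) * |θs (j + 1) - θs j| :=
          Finset.mul_sum _ _ _
      _ ≤ ∑ j ∈ Finset.range m, κ * Real.sqrt (K (θs j) (θs (j + 1))) := by
          refine Finset.sum_le_sum ?_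
          intro j hj
          have hjm : j ≤ m := le_of_lt (Finset.mem_range.mp hj)
          have hj1m : j + 1 ≤ m := Nat.succ_le_of_lt (Finset.mem_range.mp hj)
          exact seg_lower U hUΘ (θs j) (hθs j hjm) (θs (j + 1)) (hθs (j + 1) hj1m)
      _ = κ * ∑ j ∈ Finset.range m, Real.sqrt (K (θs j) (θs (j + 1))) :=
          (Finset.mul_sum _ _ _).symm
end

section
/- For the SSA recursion, for every 2 ≤ k ≤ K, N_k · K(θ̂^{(k)}, θ̂^{(k−1)}) ≤ z_k. -/
open MeasureTheory Real BigOperators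

private lemma ssa_integrable {Θ : Set ℝ} (hΘconv : Convex ℝ Θ)
    {I : ℝ → ℝ} (hIcont : ContinuousOn I Θ)
    {a b : ℝ} (ha : a ∈ Θ) (hb : b ∈ Θ) (c : ℝ) :
    IntervalIntegrable (fun u => (u - c) * I u) volume a b := by
  apply ContinuousOn.intervalIntegrable
  apply ContinuousOn.mul
  · exact (continuousOn_id.sub continuousOn_const)
  · exact hIcont.mono (hΘconv.ordConnected.uIcc_subset ha hb)

private lemma ssa_K_nonneg {Θ : Set ℝ} (hΘconv : Convex ℝ Θ)
    {I : ℝ → ℝ} (hIcont : ContinuousOn I Θ) (hIpos : ∀ u ∈ Θ, 0 < I u)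
    {a b : ℝ} (ha : a ∈ Θ) (hb : b ∈ Θ) :
    0 ≤ ∫ u in a..b, (u - a) * I u := by
  have hsub := hΘconv.ordConnected.uIcc_subset ha hb
  rcases le_total a b with hab | hab
  · apply intervalIntegral.integral_nonneg hab
    intro u hu
    have huΘ : u ∈ Θ := hsub (by rw [Set.uIcc_of_le hab]; exact hu)
    exact mul_nonneg (by linarith [hu.1]) (hIpos u huΘ).le
  · rw [intervalIntegral.integral_symm]
    rw [neg_nonneg]
    have hneg : 0 ≤ ∫ u in b..a, -((u - a) * I u) := by
      apply intervalIntegral.integral_nonneg hab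
      intro u hu
      have huΘ : u ∈ Θ := hsub (by rw [Set.uIcc_of_ge hab]; exact hu)
      have := mul_nonpos_of_nonpos_of_nonneg (by linarith [hu.2] : u - a ≤ 0) (hIpos u huΘ).le
      linarith
    rw [intervalIntegral.integral_neg] at hneg
    linarith

/-- If `c` lies between `a` and `b`, then `K(c,b) ≤ K(a,b)`. -/
private lemma ssa_K_mono {Θ : Set ℝ} (hΘconv : Convex ℝ Θ)
    {I : ℝ → ℝ} (hIcont : ContinuousOn I Θ) (hIpos : ∀ u ∈ Θ, 0 < I u)
    {a b c : ℝ} (ha : a ∈ Θ) (hb : b ∈ Θ) (hc : c ∈ Set.uIcc a b) :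
    (∫ u in c..b, (u - c) * I u) ≤ ∫ u in a..b, (u - a) * I u := by
  have hsub := hΘconv.ordConnected.uIcc_subset ha hb
  have hcΘ : c ∈ Θ := hsub hc
  rcases le_total a b with hab | hab
  · rw [Set.uIcc_of_le hab] at hc hsub
    obtain ⟨hac, hcb⟩ := hc
    have h1 : (∫ u in a..b, (u - a) * I u)
        = (∫ u in a..c, (u - a) * I u) + ∫ u in c..b, (u - a) * I u := by
      rw [intervalIntegral.integral_add_adjacent_intervals
        (ssa_integrable hΘconv hIcont ha hcΘ a) (ssa_integrable hΘconv hIcont hcΘ hb a)]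
    have h2 : 0 ≤ ∫ u in a..c, (u - a) * I u := by
      apply intervalIntegral.integral_nonneg hac
      intro u hu
      have huΘ : u ∈ Θ := hsub ⟨hu.1, hu.2.trans hcb⟩
      exact mul_nonneg (by linarith [hu.1]) (hIpos u huΘ).le
    have h3 : (∫ u in c..b, (u - c) * I u) ≤ ∫ u in c..b, (u - a) * I u := by
      apply intervalIntegral.integral_mono_on hcb
        (ssa_integrable hΘconv hIcont hcΘ hb c) (ssa_integrable hΘconv hIcont hcΘ hb a)
      intro u hu
      have huΘ : u ∈ Θ := hsub ⟨hac.trans hu.1, hu.2⟩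
      exact mul_le_mul_of_nonneg_right (by linarith [hu.1]) (hIpos u huΘ).le
    linarith
  · rw [Set.uIcc_of_ge hab] at hc hsub
    obtain ⟨hbc, hca⟩ := hc
    rw [intervalIntegral.integral_symm b a, intervalIntegral.integral_symm b c]
    have h1 : (∫ u in b..a, (u - a) * I u)
        = (∫ u in b..c, (u - a) * I u) + ∫ u in c..a, (u - a) * I u := by
      rw [intervalIntegral.integral_add_adjacent_intervals
        (ssa_integrable hΘconv hIcont hb hcΘ a) (ssa_integrable hΘconv hIcont hcΘ ha a)]
    have h2 : (∫ u in c..a, (u - a) * I u) ≤ 0 := by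
      have hneg : 0 ≤ ∫ u in c..a, -((u - a) * I u) := by
        apply intervalIntegral.integral_nonneg hca
        intro u hu
        have huΘ : u ∈ Θ := hsub ⟨hbc.trans hu.1, hu.2⟩
        have := mul_nonpos_of_nonpos_of_nonneg (by linarith [hu.2] : u - a ≤ 0) (hIpos u huΘ).le
        linarith
      rw [intervalIntegral.integral_neg] at hneg
      linarith
    have h3 : (∫ u in b..c, (u - a) * I u) ≤ ∫ u in b..c, (u - c) * I u := by
      apply intervalIntegral.integral_mono_on hbc
        (ssa_integrable hΘconv hIcont hb hcΘ a) (ssa_integrable hΘconv hIcont hb hcΘ c)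
      intro u hu
      have huΘ : u ∈ Θ := hsub ⟨hu.1, hu.2.trans hca⟩
      exact mul_le_mul_of_nonneg_right (by linarith [hu.2]) (hIpos u huΘ).le
    linarith

/-- stability of the SSA recursion at every step
(inequality (5.1) of Theorem 5.3). -/
theorem ssa_step_stability
    (Θ : Set ℝ) (hΘconv : Convex ℝ Θ) (κ : ℝ) (hκ : 1 ≤ κ)
    (I : ℝ → ℝ) (hIcont : ContinuousOn I Θ) (hIpos : ∀ u ∈ Θ, 0 < I u)
    (hIκ : ∀ u ∈ Θ, ∀ v ∈ Θ, Real.sqrt (I u / I v) ≤ κ)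
    (K : ℝ → ℝ → ℝ) (hK : ∀ a b, K a b = ∫ u in a..b, (u - a) * I u)
    (Kc : ℕ) (hKc : 1 ≤ Kc)
    (θtil : ℕ → ℝ) (hθtil : ∀ k, 1 ≤ k → k ≤ Kc → θtil k ∈ Θ)
    (N : ℕ → ℝ) (hN : ∀ k, 1 ≤ k → k ≤ Kc → 0 < N k)
    (z : ℕ → ℝ) (hz : ∀ k, 2 ≤ k → k ≤ Kc → 0 < z k)
    (Kag : ℝ → ℝ) (hKag01 : ∀ t, 0 ≤ t → Kag t ∈ Set.Icc (0 : ℝ) 1)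
    (hKagmono : AntitoneOn Kag (Set.Ici 0))
    (hKag0 : ∀ t, 1 ≤ t → Kag t = 0)
    (θhat : ℕ → ℝ) (hθhat1 : θhat 1 = θtil 1)
    (hθhatrec : ∀ k, 2 ≤ k → k ≤ Kc →
      θhat k = Kag (N k * K (θtil k) (θhat (k - 1)) / z k) * θtil k
        + (1 - Kag (N k * K (θtil k) (θhat (k - 1)) / z k)) * θhat (k - 1)) :
    ∀ k, 2 ≤ k → k ≤ Kc → N k * K (θhat k) (θhat (k - 1)) ≤ z k := by
  -- first: θhat k ∈ Θ for all 1 ≤ k ≤ Kc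
  have hmem : ∀ k, 1 ≤ k → k ≤ Kc → θhat k ∈ Θ := by
    intro k hk
    induction k, hk using Nat.le_induction with
    | base => intro _; rw [hθhat1]; exact hθtil 1 le_rfl hKc
    | succ n hn ih =>
      intro hle
      have hnKc : n ≤ Kc := le_trans (Nat.le_succ n) hle
      have hprev : θhat n ∈ Θ := ih hnKc
      have htilmem : θtil (n+1) ∈ Θ := hθtil (n+1) (by omega) hle
      have h2 : 2 ≤ n + 1 := by omega
      have hrec := hθhatrec (n+1) h2 hle
      simp only [Nat.add_sub_cancel] at hrec
      set t := N (n+1) * K (θtil (n+1)) (θhat n) / z (n+1) with ht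
      have htnn : 0 ≤ t := by
        apply div_nonneg _ (hz (n+1) h2 hle).le
        apply mul_nonneg (hN (n+1) (by omega) hle).le
        rw [hK]
        exact ssa_K_nonneg hΘconv hIcont hIpos htilmem hprev
      obtain ⟨hg0, hg1⟩ := hKag01 t htnn
      rw [hrec]
      have := hΘconv htilmem hprev hg0 (by linarith : (0:ℝ) ≤ 1 - Kag t)
        (by ring : Kag t + (1 - Kag t) = 1)
      simpa [smul_eq_mul] using this
  intro k hk2 hkKc
  have hprev : θhat (k-1) ∈ Θ := hmem (k-1) (by omega) (by omega)
  have htilmem : θtil k ∈ Θ := hθtil k (by omega) hkKc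
  have hzk := hz k hk2 hkKc
  have hNk := hN k (by omega) hkKc
  have hrec := hθhatrec k hk2 hkKc
  set t := N k * K (θtil k) (θhat (k-1)) / z k with ht
  have hKtil : 0 ≤ K (θtil k) (θhat (k-1)) := by
    rw [hK]; exact ssa_K_nonneg hΘconv hIcont hIpos htilmem hprev
  have htnn : 0 ≤ t := div_nonneg (mul_nonneg hNk.le hKtil) hzk.le
  obtain ⟨hg0, hg1⟩ := hKag01 t htnn
  rcases eq_or_lt_of_le hg0 with hgz | hgpos
  · -- Kag t = 0, so θhat k = θhat (k-1)
    have heq : θhat k = θhat (k-1) := by rw [hrec, ← hgz]; ring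
    rw [heq, hK]
    simp only [intervalIntegral.integral_same, mul_zero]
    exact hzk.le
  · -- Kag t > 0, so t < 1
    have htlt : t < 1 := by
      by_contra h
      push_neg at h
      rw [hKag0 t h] at hgpos
      exact lt_irrefl 0 hgpos
    have hlt : N k * K (θtil k) (θhat (k-1)) < z k := by
      rw [ht, div_lt_one hzk] at htlt
      exact htlt
    have hcmem : θhat k ∈ Set.uIcc (θtil k) (θhat (k-1)) := by
      rw [hrec]
      have := convex_uIcc (𝕜 := ℝ) (θtil k) (θhat (k-1))
        Set.left_mem_uIcc Set.right_mem_uIcc hg0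
        (by linarith : (0:ℝ) ≤ 1 - Kag t) (by ring : Kag t + (1 - Kag t) = 1)
      simpa [smul_eq_mul] using this
    have hmono : K (θhat k) (θhat (k-1)) ≤ K (θtil k) (θhat (k-1)) := by
      rw [hK, hK]
      exact ssa_K_mono hΘconv hIcont hIpos htilmem hprev hcmem
    calc N k * K (θhat k) (θhat (k-1)) ≤ N k * K (θtil k) (θhat (k-1)) :=
          mul_le_mul_of_nonneg_left hmono hNk.le
      _ ≤ z k := hlt.le
end

section
/- Assume additionally condition (A3): 0 < u_0 ≤ N_{k−1}/N_k ≤ u < 1 for all 2 ≤ k ≤ K. Then for the SSA recursion, for all 1 ≤ k < k' ≤ K, N_k · K(θ̂^{(k')}, θ̂^{(k)}) ≤ κ²·c_u²·z̄_k, where c_u := (u^{−1/2} − 1)^{−1} and z̄_k := max_{k < l ≤ K} z_l. -/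
open MeasureTheory Real BigOperators

lemma ssa_aux_integral_bounds (I : ℝ → ℝ) (a b m M : ℝ)
    (hlow : ∀ x ∈ Set.uIcc a b, m ≤ I x) (hupp : ∀ x ∈ Set.uIcc a b, I x ≤ M)
    (hcont : ContinuousOn I (Set.uIcc a b)) :
    m * (b - a)^2 / 2 ≤ (∫ x in a..b, (x - a) * I x) ∧
    (∫ x in a..b, (x - a) * I x) ≤ M * (b - a)^2 / 2 := by
  have base : ∀ c : ℝ, ∀ p q : ℝ, (∫ x in p..q, (x - a) * c) = c * ((q-a)^2 - (p-a)^2)/2 := by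
    intro c p q
    rw [intervalIntegral.integral_mul_const,
      intervalIntegral.integral_sub intervalIntegral.intervalIntegrable_id intervalIntegrable_const,
      integral_id, intervalIntegral.integral_const, smul_eq_mul]
    ring
  have hint : IntervalIntegrable (fun x => (x - a) * I x) volume a b := by
    apply ContinuousOn.intervalIntegrable
    exact (continuousOn_id.sub continuousOn_const).mul hcont
  rcases le_total a b with hab | hab
  · have huicc : Set.uIcc a b = Set.Icc a b := Set.uIcc_of_le hab
    constructor
    · calc m * (b-a)^2/2 = ∫ x in a..b, (x - a) * m := by rw [base]; ring
        _ ≤ ∫ x in a..b, (x - a) * I x := by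
            apply intervalIntegral.integral_mono_on hab
              (by apply ContinuousOn.intervalIntegrable; fun_prop) hint
            intro x hx
            have h1 : 0 ≤ x - a := by linarith [hx.1]
            have := hlow x (huicc ▸ hx)
            nlinarith
    · calc (∫ x in a..b, (x - a) * I x) ≤ ∫ x in a..b, (x - a) * M := by
            apply intervalIntegral.integral_mono_on hab hint
              (by apply ContinuousOn.intervalIntegrable; fun_prop)
            intro x hx
            have h1 : 0 ≤ x - a := by linarith [hx.1]
            have := hupp x (huicc ▸ hx)
            nlinarith
        _ = M * (b-a)^2/2 := by rw [base]; ring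
  · have huicc : Set.uIcc a b = Set.Icc b a := Set.uIcc_of_ge hab
    have hint' : IntervalIntegrable (fun x => (x - a) * I x) volume b a := hint.symm
    rw [intervalIntegral.integral_symm]
    constructor
    · have : (∫ x in b..a, (x - a) * I x) ≤ ∫ x in b..a, (x - a) * m := by
        apply intervalIntegral.integral_mono_on hab hint'
          (by apply ContinuousOn.intervalIntegrable; fun_prop)
        intro x hx
        have h1 : x - a ≤ 0 := by linarith [hx.2]
        have := hlow x (huicc ▸ hx)
        nlinarith
      rw [base] at this
      nlinarith
    · have : (∫ x in b..a, (x - a) * M) ≤ ∫ x in b..a, (x - a) * I x := by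
        apply intervalIntegral.integral_mono_on hab
          (by apply ContinuousOn.intervalIntegrable; fun_prop) hint'
        intro x hx
        have h1 : x - a ≤ 0 := by linarith [hx.2]
        have := hupp x (huicc ▸ hx)
        nlinarith
      rw [base] at this
      nlinarith

lemma ssa_aux_sqrt_pow (x : ℝ) (hx : 0 ≤ x) (n : ℕ) :
    Real.sqrt (x ^ n) = Real.sqrt x ^ n := by
  induction n with
  | zero => simp
  | succ m ih => rw [pow_succ, pow_succ, Real.sqrt_mul (pow_nonneg hx m), ih]

lemma ssa_aux_geom (s : ℝ) (h0 : 0 ≤ s) (h1 : s < 1) (k m : ℕ) :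
    ∑ l ∈ Finset.Ico (k+1) (m+1), s^(l-k) ≤ s / (1 - s) := by
  have hrw : ∑ l ∈ Finset.Ico (k+1) (m+1), s^(l-k)
      = ∑ i ∈ Finset.range ((m+1) - (k+1)), s^(i+1) := by
    rw [Finset.sum_Ico_eq_sum_range]
    apply Finset.sum_congr rfl
    intro i _
    congr 1
    omega
  have hmul : ∑ i ∈ Finset.range ((m+1)-(k+1)), s^(i+1)
      = s * ∑ i ∈ Finset.range ((m+1)-(k+1)), s^i := by
    rw [Finset.mul_sum]; apply Finset.sum_congr rfl; intro i _; ring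
  rw [hrw, hmul]
  have hgs : ∑ i ∈ Finset.range ((m+1)-(k+1)), s^i ≤ 1/(1-s) := by
    rw [geom_sum_eq (by linarith : s ≠ 1)]
    have heq : (s^((m+1)-(k+1)) - 1)/(s-1) = (1 - s^((m+1)-(k+1)))/(1-s) := by
      rw [div_eq_div_iff (by linarith) (by linarith)]; ring
    rw [heq]
    have hnum : 1 - s^((m+1)-(k+1)) ≤ 1 := by
      have := pow_nonneg h0 ((m+1)-(k+1)); linarith
    apply div_le_div_of_nonneg_right hnum (by linarith) |>.trans_eq rfl
  calc s * ∑ i ∈ Finset.range ((m+1)-(k+1)), s^i ≤ s * (1/(1-s)) := by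
        apply mul_le_mul_of_nonneg_left hgs h0
    _ = s / (1-s) := by ring

set_option maxHeartbeats 1000000 in
/-- "stability after propagation" for the SSA recursion
(inequality (5.2) of Theorem 5.3), under condition (A3). -/
theorem ssa_stability_after_propagation
    (Θ : Set ℝ) (hΘconv : Convex ℝ Θ) (κ : ℝ) (hκ : 1 ≤ κ)
    (I : ℝ → ℝ) (hIcont : ContinuousOn I Θ) (hIpos : ∀ u ∈ Θ, 0 < I u)
    (hIκ : ∀ u ∈ Θ, ∀ v ∈ Θ, Real.sqrt (I u / I v) ≤ κ)
    (K : ℝ → ℝ → ℝ) (hK : ∀ a b, K a b = ∫ u in a..b, (u - a) * I u)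
    (Kc : ℕ) (hKc : 1 ≤ Kc)
    (θtil : ℕ → ℝ) (hθtil : ∀ k, 1 ≤ k → k ≤ Kc → θtil k ∈ Θ)
    (N : ℕ → ℝ) (hN : ∀ k, 1 ≤ k → k ≤ Kc → 0 < N k)
    (z : ℕ → ℝ) (hz : ∀ k, 2 ≤ k → k ≤ Kc → 0 < z k)
    (Kag : ℝ → ℝ) (hKag01 : ∀ t, 0 ≤ t → Kag t ∈ Set.Icc (0 : ℝ) 1)
    (hKagmono : AntitoneOn Kag (Set.Ici 0))
    (hKag0 : ∀ t, 1 ≤ t → Kag t = 0)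
    (θhat : ℕ → ℝ) (hθhat1 : θhat 1 = θtil 1)
    (hθhatrec : ∀ k, 2 ≤ k → k ≤ Kc →
      θhat k = Kag (N k * K (θtil k) (θhat (k - 1)) / z k) * θtil k
        + (1 - Kag (N k * K (θtil k) (θhat (k - 1)) / z k)) * θhat (k - 1))
    (u₀ u : ℝ) (hu₀ : 0 < u₀) (hu₀u : u₀ ≤ u) (hu : u < 1)
    (hA3 : ∀ k, 2 ≤ k → k ≤ Kc →
      u₀ ≤ N (k - 1) / N k ∧ N (k - 1) / N k ≤ u) :
    ∀ k k' : ℕ, 1 ≤ k → k < k' → k' ≤ Kc →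
      N k * K (θhat k') (θhat k)
        ≤ κ ^ 2 * ((1 / Real.sqrt u - 1)⁻¹) ^ 2 * sSup (z '' {l | k < l ∧ l ≤ Kc}) := by
  have hκ0 : 0 < κ := by linarith
  have hu0 : 0 < u := lt_of_lt_of_le hu₀ hu₀u
  -- two-sided bound for K with witnesses in Θ
  have Kbnd : ∀ a ∈ Θ, ∀ b ∈ Θ, ∃ ξ₁ ∈ Θ, ∃ ξ₂ ∈ Θ,
      I ξ₁ * (b-a)^2/2 ≤ K a b ∧ K a b ≤ I ξ₂ * (b-a)^2/2 := by
    intro a ha b hb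
    have hsub : Set.uIcc a b ⊆ Θ := hΘconv.ordConnected.uIcc_subset ha hb
    have hcont' : ContinuousOn I (Set.uIcc a b) := hIcont.mono hsub
    obtain ⟨ξ₁, hξ₁m, hmin⟩ := isCompact_uIcc.exists_isMinOn Set.nonempty_uIcc hcont'
    obtain ⟨ξ₂, hξ₂m, hmax⟩ := isCompact_uIcc.exists_isMaxOn Set.nonempty_uIcc hcont'
    have hb2 := ssa_aux_integral_bounds I a b (I ξ₁) (I ξ₂)
      (fun x hx => hmin hx) (fun x hx => hmax hx) hcont'
    exact ⟨ξ₁, hsub hξ₁m, ξ₂, hsub hξ₂m, by rw [hK]; exact hb2.1, by rw [hK]; exact hb2.2⟩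
  have Knonneg : ∀ a ∈ Θ, ∀ b ∈ Θ, 0 ≤ K a b := by
    intro a ha b hb
    obtain ⟨ξ₁, hξ₁, ξ₂, hξ₂, hlb, hub⟩ := Kbnd a ha b hb
    have := hIpos ξ₁ hξ₁
    nlinarith [sq_nonneg (b-a)]
  -- κ² comparison of information values
  have hIcomp : ∀ w ∈ Θ, ∀ v ∈ Θ, I w ≤ κ^2 * I v := by
    intro w hw v hv
    have h1 := hIκ w hw v hv
    have hvpos := hIpos v hv
    have hwpos := hIpos w hw
    have hdiv : 0 ≤ I w / I v := le_of_lt (div_pos hwpos hvpos)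
    have : I w / I v ≤ κ^2 := by
      have := pow_le_pow_left₀ (Real.sqrt_nonneg _) h1 2
      rwa [Real.sq_sqrt hdiv] at this
    calc I w = (I w / I v) * I v := by field_simp
      _ ≤ κ^2 * I v := mul_le_mul_of_nonneg_right this (le_of_lt hvpos)
  -- membership of the aggregated estimates
  have hmem : ∀ l, 1 ≤ l → l ≤ Kc → θhat l ∈ Θ := by
    intro l hl
    induction l, hl using Nat.le_induction with
    | base => intro _; rw [hθhat1]; exact hθtil 1 le_rfl hKc
    | succ n hn ih =>
      intro hle
      have h2 : 2 ≤ n+1 := by omega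
      have hθn : θhat n ∈ Θ := ih (by omega)
      have hθt : θtil (n+1) ∈ Θ := hθtil _ (by omega) hle
      rw [hθhatrec (n+1) h2 hle]
      simp only [Nat.add_sub_cancel]
      set t := N (n+1) * K (θtil (n+1)) (θhat n) / z (n+1) with ht
      have ht0 : 0 ≤ t := div_nonneg
        (mul_nonneg (hN _ (by omega) hle).le (Knonneg _ hθt _ hθn))
        (hz _ h2 hle).le
      have hγ := hKag01 t ht0
      have := hΘconv hθt hθn hγ.1 (by linarith [hγ.2] : (0:ℝ) ≤ 1 - Kag t)
        (by ring : Kag t + (1 - Kag t) = 1)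
      simpa [smul_eq_mul] using this
  -- per-step displacement bound, against arbitrary reference point w ∈ Θ
  have hstep : ∀ l, 2 ≤ l → l ≤ Kc → ∀ w ∈ Θ,
      |θhat l - θhat (l-1)| ≤ κ * Real.sqrt (2 * z l / (N l * I w)) := by
    intro l h2 hle w hw
    have hθn : θhat (l-1) ∈ Θ := hmem (l-1) (by omega) (by omega)
    have hθt : θtil l ∈ Θ := hθtil l (by omega) hle
    have hwpos := hIpos w hw
    have hNl := hN l (by omega) hle
    have hzl := hz l h2 hle
    have hsq : 0 ≤ 2 * z l / (N l * I w) := by positivity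
    set t := N l * K (θtil l) (θhat (l-1)) / z l with ht
    by_cases hγ0 : Kag t = 0
    · rw [hθhatrec l h2 hle, hγ0]
      have : (0:ℝ) * θtil l + (1 - 0) * θhat (l-1) - θhat (l-1) = 0 := by ring
      rw [this, abs_zero]
      positivity
    · have ht1 : t < 1 := by
        by_contra h
        exact hγ0 (hKag0 t (le_of_not_gt h))
      have hKlt : N l * K (θtil l) (θhat (l-1)) ≤ z l := by
        rw [ht, div_lt_one hzl] at ht1
        linarith
      obtain ⟨ξ₁, hξ₁, ξ₂, hξ₂, hlb, _⟩ := Kbnd (θtil l) hθt (θhat (l-1)) hθn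
      have hξ₁pos := hIpos ξ₁ hξ₁
      -- squared step size bound
      have hsq2 : (θhat (l-1) - θtil l)^2 ≤ κ^2 * (2 * z l / (N l * I w)) := by
        have hcomp : I w ≤ κ^2 * I ξ₁ := hIcomp w hw ξ₁ hξ₁
        rw [← mul_div_assoc, le_div_iff₀ (by positivity : (0:ℝ) < N l * I w)]
        have f1 : N l * (I ξ₁ * (θhat (l-1) - θtil l)^2/2) ≤ N l * K (θtil l) (θhat (l-1)) :=
          mul_le_mul_of_nonneg_left hlb hNl.le
        have f2 : I w * (N l * (θhat (l-1) - θtil l)^2)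
            ≤ (κ^2 * I ξ₁) * (N l * (θhat (l-1) - θtil l)^2) :=
          mul_le_mul_of_nonneg_right hcomp
            (mul_nonneg hNl.le (sq_nonneg _))
        have f3 : N l * (I ξ₁ * (θhat (l-1) - θtil l)^2) ≤ 2 * z l := by linarith
        have f4 : κ^2 * (N l * (I ξ₁ * (θhat (l-1) - θtil l)^2)) ≤ κ^2 * (2 * z l) :=
          mul_le_mul_of_nonneg_left f3 (by positivity)
        nlinarith [f2, f4]
      -- |θhat l - θhat (l-1)| ≤ |θtil l - θhat (l-1)|
      have ht0 : 0 ≤ t := div_nonneg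
        (mul_nonneg hNl.le (Knonneg _ hθt _ hθn)) hzl.le
      have hγ := hKag01 t ht0
      have hdiff : θhat l - θhat (l-1) = Kag t * (θtil l - θhat (l-1)) := by
        rw [hθhatrec l h2 hle]; ring
      have habs : |θhat l - θhat (l-1)| ≤ |θtil l - θhat (l-1)| := by
        rw [hdiff, abs_mul, abs_of_nonneg hγ.1]
        nlinarith [abs_nonneg (θtil l - θhat (l-1)), hγ.2]
      calc |θhat l - θhat (l-1)| ≤ |θtil l - θhat (l-1)| := habs
        _ = Real.sqrt ((θtil l - θhat (l-1))^2) := (Real.sqrt_sq_eq_abs _).symm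
        _ ≤ Real.sqrt (κ^2 * (2 * z l / (N l * I w))) := by
            apply Real.sqrt_le_sqrt
            calc (θtil l - θhat (l-1))^2 = (θhat (l-1) - θtil l)^2 := by ring
              _ ≤ κ^2 * (2 * z l / (N l * I w)) := hsq2
        _ = κ * Real.sqrt (2 * z l / (N l * I w)) := by
            rw [Real.sqrt_mul (by positivity), Real.sqrt_sq hκ0.le]
  intro k k' hk1 hkk' hk'K
  -- geometric decay of the sample sizes
  have hNgeom : ∀ j : ℕ, k + j ≤ Kc → N k ≤ u ^ j * N (k + j) := by
    intro j
    induction j with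
    | zero => intro h; simp
    | succ n ih =>
      intro h
      have h1 : k + n ≤ Kc := by omega
      have hA := (hA3 (k+n+1) (by omega) (by omega)).2
      simp only [Nat.add_sub_cancel] at hA
      have hNp : 0 < N (k+n+1) := hN _ (by omega) (by omega)
      have hstep' : N (k+n) ≤ u * N (k+n+1) := by
        rw [div_le_iff₀ hNp] at hA; linarith
      calc N k ≤ u^n * N (k+n) := ih h1
        _ ≤ u^n * (u * N (k+n+1)) :=
            mul_le_mul_of_nonneg_left hstep' (pow_nonneg hu0.le n)
        _ = u^(n+1) * N (k+n+1) := by ring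
  have hNdiv : ∀ l, k < l → l ≤ Kc → N k ≤ u ^ (l - k) * N l := by
    intro l h1 h2
    have := hNgeom (l - k) (by omega)
    have hl : k + (l - k) = l := by omega
    rwa [hl] at this
  -- the sup of critical values
  set Zs := sSup (z '' {l | k < l ∧ l ≤ Kc}) with hZs
  have hset : {l | k < l ∧ l ≤ Kc} = Set.Ioc k Kc := by
    ext l; simp [Set.mem_Ioc]
  have hfin : (z '' {l | k < l ∧ l ≤ Kc}).Finite := by
    rw [hset]; exact (Set.finite_Ioc k Kc).image z
  have hzle : ∀ l, k < l → l ≤ Kc → z l ≤ Zs := by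
    intro l h1 h2
    exact le_csSup hfin.bddAbove ⟨l, ⟨h1, h2⟩, rfl⟩
  have hZpos : 0 < Zs :=
    lt_of_lt_of_le (hz k' (by omega) hk'K) (hzle k' hkk' hk'K)
  -- endpoints in Θ
  have hθk : θhat k ∈ Θ := hmem k hk1 (by omega)
  have hθk' : θhat k' ∈ Θ := hmem k' (by omega) hk'K
  obtain ⟨ξ₁, hξ₁, ξ₂, hξ₂, _, hub⟩ := Kbnd (θhat k') hθk' (θhat k) hθk
  have hξ₂pos := hIpos ξ₂ hξ₂
  have hNk := hN k hk1 (by omega)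
  set s := Real.sqrt u with hs
  have hs0 : 0 < s := Real.sqrt_pos.mpr hu0
  have hs1 : s < 1 := by
    rw [hs, Real.sqrt_lt' one_pos]
    nlinarith
  set C := κ * Real.sqrt (2 * Zs / (N k * I ξ₂)) with hC
  have hC0 : 0 ≤ C := by positivity
  -- per-step bound in geometric form
  have hstep2 : ∀ l, k < l → l ≤ Kc → |θhat l - θhat (l-1)| ≤ C * s^(l-k) := by
    intro l h1 h2
    have h2' : 2 ≤ l := by omega
    have := hstep l h2' h2 ξ₂ hξ₂
    refine this.trans ?_
    rw [hC, mul_assoc]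
    apply mul_le_mul_of_nonneg_left _ hκ0.le
    have hNl := hN l (by omega) h2
    have harg : 2 * z l / (N l * I ξ₂) ≤ 2 * Zs / (N k * I ξ₂) * u^(l-k) := by
      have hzl := hzle l h1 h2
      have hNd := hNdiv l h1 h2
      have hzlpos := hz l h2' h2
      have hupow : (0:ℝ) < u^(l-k) := pow_pos hu0 (l-k)
      have hrw : 2 * Zs / (N k * I ξ₂) * u^(l-k) = 2 * Zs * u^(l-k) / (N k * I ξ₂) := by
        ring
      rw [hrw, div_le_div_iff₀ (by positivity : (0:ℝ) < N l * I ξ₂)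
        (by positivity : (0:ℝ) < N k * I ξ₂)]
      have e1 : z l * N k ≤ z l * (u^(l-k) * N l) :=
        mul_le_mul_of_nonneg_left hNd hzlpos.le
      have e2 : z l * (u^(l-k) * N l) ≤ Zs * (u^(l-k) * N l) :=
        mul_le_mul_of_nonneg_right hzl (by positivity)
      have e3 : (z l * N k) * (2 * I ξ₂) ≤ (Zs * (u^(l-k) * N l)) * (2 * I ξ₂) :=
        mul_le_mul_of_nonneg_right (e1.trans e2) (by positivity)
      linarith [e3]
    calc Real.sqrt (2 * z l / (N l * I ξ₂))
        ≤ Real.sqrt (2 * Zs / (N k * I ξ₂) * u^(l-k)) := Real.sqrt_le_sqrt harg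
      _ = Real.sqrt (2 * Zs / (N k * I ξ₂)) * s^(l-k) := by
          rw [Real.sqrt_mul (by positivity), ssa_aux_sqrt_pow u hu0.le]
  -- triangle inequality along the recursion
  have htri : ∀ m, k ≤ m → m ≤ Kc →
      |θhat m - θhat k| ≤ C * ∑ l ∈ Finset.Ico (k+1) (m+1), s^(l-k) := by
    intro m hm
    induction m, hm using Nat.le_induction with
    | base => intro _; simp
    | succ n hn ih =>
      intro hle
      have hsum := Finset.sum_Ico_succ_top (by omega : k+1 ≤ n+1) (fun l => s^(l-k))
      have h1 := hstep2 (n+1) (by omega) hle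
      simp only [Nat.add_sub_cancel] at h1
      have h2 := ih (by omega)
      calc |θhat (n+1) - θhat k|
          ≤ |θhat (n+1) - θhat n| + |θhat n - θhat k| := abs_sub_le _ _ _
        _ ≤ C * s^(n+1-k) + C * ∑ l ∈ Finset.Ico (k+1) (n+1), s^(l-k) := by
            exact add_le_add h1 h2
        _ = C * ∑ l ∈ Finset.Ico (k+1) (n+1+1), s^(l-k) := by
            rw [hsum]; ring
  -- the geometric series bound
  have hgeo : ∑ l ∈ Finset.Ico (k+1) (k'+1), s^(l-k) ≤ s / (1-s) :=
    ssa_aux_geom s hs0.le hs1 k k'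
  have hcu : s / (1-s) = (1 / s - 1)⁻¹ := by
    have h : 1/s - 1 = (1-s)/s := by field_simp
    rw [h, inv_div]
  set q := s / (1-s) with hq
  have hq0 : 0 ≤ q := by
    apply div_nonneg hs0.le; linarith
  have hfinal : |θhat k' - θhat k| ≤ C * q :=
    (htri k' (le_of_lt hkk') hk'K).trans (mul_le_mul_of_nonneg_left hgeo hC0)
  have habs2 : (θhat k - θhat k')^2 ≤ (C*q)^2 := by
    have h1 := pow_le_pow_left₀ (abs_nonneg _) hfinal 2
    rw [sq_abs] at h1
    calc (θhat k - θhat k')^2 = (θhat k' - θhat k)^2 := by ring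
      _ ≤ (C*q)^2 := h1
  have hA : Real.sqrt (2*Zs/(N k * I ξ₂))^2 = 2*Zs/(N k*I ξ₂) :=
    Real.sq_sqrt (by positivity)
  have hne : N k * I ξ₂ ≠ 0 := by positivity
  calc N k * K (θhat k') (θhat k)
      ≤ N k * (I ξ₂ * (θhat k - θhat k')^2/2) :=
        mul_le_mul_of_nonneg_left hub hNk.le
    _ ≤ N k * (I ξ₂ * (C*q)^2/2) := by
        apply mul_le_mul_of_nonneg_left _ hNk.le
        nlinarith [habs2, hξ₂pos]
    _ = κ^2 * q^2 * Zs := by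
        rw [hC, mul_pow, mul_pow, hA]
        field_simp
    _ = κ^2 * ((1 / Real.sqrt u - 1)⁻¹)^2 * Zs := by rw [hcu]
end
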